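/- arXiv:1112.0670 — 3 statements merged into one kernel-verified Lean document; each statement's English description precedes it below -/
import Mathlib

section
/- Under the standing hypotheses, R is an α-partial Galois extension of R^α if and only if R is a finitely generated projective right R^α-module and the map j : R⋆_αG → End(R)_{R^α}, j(Σ_{g∈G} a_gδ_g)(x) = Σ_{g∈G} a_g·α_g(x·1_{g⁻¹}), is an isomorphism of rings and of left R-modules. -/
universe u

/-- A groupoid in the algebraic sense of Lawson: a non-empty set `G` with a
partially defined binary operation (here modeled by a total operation `mul`
whose value is only constrained when it is defined, i.e. when `d g = r h`),
an inversion `inv`, and domain/range maps `d`, `r`. -/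
structure AlgGroupoid (G : Type u) where
  mul : G → G → G
  inv : G → G
  d : G → G
  r : G → G
  mul_assoc' : ∀ g h l, d g = r h → d h = r l → mul (mul g h) l = mul g (mul h l)
  mul_d : ∀ g, mul g (d g) = g
  r_mul : ∀ g, mul (r g) g = g
  inv_mul : ∀ g, mul (inv g) g = d g
  mul_inv : ∀ g, mul g (inv g) = r g
  d_mul : ∀ g h, d g = r h → d (mul g h) = d h
  r_mul' : ∀ g h, d g = r h → r (mul g h) = r g
  d_inv : ∀ g, d (inv g) = r g
  r_inv : ∀ g, r (inv g) = d g
  inv_inv : ∀ g, inv (inv g) = g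
  d_d : ∀ g, d (d g) = d g
  r_d : ∀ g, r (d g) = d g
  d_r : ∀ g, d (r g) = r g
  r_r : ∀ g, r (r g) = r g

/-- `e` is an identity element of the groupoid `𝔾`, i.e. an element of `G₀`. -/
def AlgGroupoid.isId {G : Type u} (𝔾 : AlgGroupoid G) (e : G) : Prop := 𝔾.d e = e

instance {G : Type u} [DecidableEq G] (𝔾 : AlgGroupoid G) (e : G) : Decidable (𝔾.isId e) :=
  inferInstanceAs (Decidable (𝔾.d e = e))

/-- `D` is a two-sided ideal of `E` (both being subsets of an ambient
non-unital ring `T`). -/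
structure IsIdealIn {T : Type u} [NonUnitalRing T] (D E : Set T) : Prop where
  subset : D ⊆ E
  zero_mem : (0 : T) ∈ D
  add_mem : ∀ ⦃x y : T⦄, x ∈ D → y ∈ D → x + y ∈ D
  neg_mem : ∀ ⦃x : T⦄, x ∈ D → -x ∈ D
  mul_mem_left : ∀ ⦃x y : T⦄, x ∈ E → y ∈ D → x * y ∈ D
  mul_mem_right : ∀ ⦃x y : T⦄, x ∈ D → y ∈ E → x * y ∈ D

/-- `u` is a (two-sided) multiplicative identity element of the subset `D`. -/
def IsIdentityElem {T : Type u} [NonUnitalRing T] (u : T) (D : Set T) : Prop :=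
  u ∈ D ∧ ∀ x ∈ D, u * x = x ∧ x * u = x

/-- A partial action `α = ({D_g}, {α_g})` of a groupoid `𝔾` on the ring whose
carrier is the subset `R` of the ambient non-unital ring `T` (take
`R = Set.univ` for a partial action on `T` itself).  For each `g`, `D (r g)`
is an ideal of `R`, `D g` is an ideal of `D (r g)` and `act g` restricts to a
ring isomorphism from `D (inv g)` onto `D g`; moreover `act e` is the identity
of `D e` for identities `e`, and for composable `g, h` the map `act (mul g h)`
extends `act g ∘ act h` (whose domain is `(act h)⁻¹ (D (inv g) ∩ D h)`). -/
structure PartialGroupoidAction {G : Type u} (𝔾 : AlgGroupoid G) (T : Type u)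
    [NonUnitalRing T] (R : Set T) where
  D : G → Set T
  act : G → T → T
  ideal_r : ∀ g, IsIdealIn (D (𝔾.r g)) R
  ideal : ∀ g, IsIdealIn (D g) (D (𝔾.r g))
  bijOn : ∀ g, Set.BijOn (act g) (D (𝔾.inv g)) (D g)
  map_add : ∀ g, ∀ x ∈ D (𝔾.inv g), ∀ y ∈ D (𝔾.inv g), act g (x + y) = act g x + act g y
  map_mul : ∀ g, ∀ x ∈ D (𝔾.inv g), ∀ y ∈ D (𝔾.inv g), act g (x * y) = act g x * act g y
  act_id : ∀ e, 𝔾.isId e → ∀ x ∈ D e, act e x = x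
  dom_cond : ∀ g h, 𝔾.d g = 𝔾.r h → ∀ x ∈ D (𝔾.inv h), act h x ∈ D (𝔾.inv g) →
    x ∈ D (𝔾.inv (𝔾.mul g h))
  comp_cond : ∀ g h, 𝔾.d g = 𝔾.r h → ∀ x ∈ D (𝔾.inv h), act h x ∈ D (𝔾.inv g) →
    act g (act h x) = act (𝔾.mul g h) x

/-- The partial action `α` is global if, for all composable `g, h`, the
composite `α_g ∘ α_h` (taken on its largest possible domain) coincides with
`α_{gh}`; since both maps always agree on the domain of the composite, this
amounts to the equality of the two domains. -/
def PartialGroupoidAction.IsGlobal {G : Type u} {𝔾 : AlgGroupoid G} {T : Type u}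
    [NonUnitalRing T] {R : Set T} (α : PartialGroupoidAction 𝔾 T R) : Prop :=
  ∀ g h, 𝔾.d g = 𝔾.r h →
    {x | x ∈ α.D (𝔾.inv h) ∧ α.act h x ∈ α.D (𝔾.inv g)} = α.D (𝔾.inv (𝔾.mul g h))

/-- The subring `R^α` of invariants of `R` under the partial action `α`,
where `one g` denotes the identity element `1_g` of the ideal `D_g`. -/
def invariants {G : Type u} (𝔾 : AlgGroupoid G) {R : Type u} [Ring R]
    (α : PartialGroupoidAction 𝔾 R (Set.univ : Set R)) (one : G → R) : Set R :=
  {x : R | ∀ g : G, α.act g (x * one (𝔾.inv g)) = x * one g}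

/-- The trace map `t_α : R → R`, `t_α(x) = ∑_{g ∈ G} α_g(x 1_{g⁻¹})`. -/
def traceMap {G : Type u} [Fintype G] (𝔾 : AlgGroupoid G) {R : Type u} [Ring R]
    (α : PartialGroupoidAction 𝔾 R (Set.univ : Set R)) (one : G → R) (x : R) : R :=
  ∑ g : G, α.act g (x * one (𝔾.inv g))

/-- `R` is an `α`-partial Galois extension of `R^α`: there is a partial Galois
coordinate system `x_i, y_i ∈ R` with
`∑_i x_i α_g(y_i 1_{g⁻¹}) = δ_{e,g} 1_e` for all `e ∈ G₀`, `g ∈ G`. -/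
def IsPartialGalois {G : Type u} [Fintype G] [DecidableEq G] (𝔾 : AlgGroupoid G)
    {R : Type u} [Ring R] (α : PartialGroupoidAction 𝔾 R (Set.univ : Set R))
    (one : G → R) : Prop :=
  ∃ (n : ℕ) (xs ys : Fin n → R), ∀ g : G,
    ∑ i, xs i * α.act g (ys i * one (𝔾.inv g)) = if 𝔾.isId g then one g else 0

namespace PGaux

section Groupoid
variable {G : Type u} (𝔾 : AlgGroupoid G)

theorem isId_d (g : G) : 𝔾.isId (𝔾.d g) := 𝔾.d_d g
theorem isId_r (g : G) : 𝔾.isId (𝔾.r g) := 𝔾.d_r g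

theorem r_of_isId {e : G} (he : 𝔾.isId e) : 𝔾.r e = e := by
  conv_lhs => rw [← he, 𝔾.r_d]
  exact he

theorem inv_of_isId {e : G} (he : 𝔾.isId e) : 𝔾.inv e = e := by
  have h1 : 𝔾.d (𝔾.inv e) = 𝔾.r e := 𝔾.d_inv e
  have h2 : 𝔾.inv e = 𝔾.mul (𝔾.inv e) e := by
    conv_lhs => rw [← 𝔾.mul_d (𝔾.inv e)]
    rw [h1, r_of_isId 𝔾 he]
  rw [h2, 𝔾.inv_mul]
  exact he

theorem cancel_left {h g : G} (hr : 𝔾.r h = 𝔾.r g) :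
    𝔾.mul h (𝔾.mul (𝔾.inv h) g) = g := by
  rw [← 𝔾.mul_assoc' h (𝔾.inv h) g ((𝔾.r_inv h).symm) (by rw [𝔾.d_inv]; exact hr),
    𝔾.mul_inv, hr, 𝔾.r_mul]

theorem cancel_left' {h g : G} (hd : 𝔾.d h = 𝔾.r g) :
    𝔾.mul (𝔾.inv h) (𝔾.mul h g) = g := by
  rw [← 𝔾.mul_assoc' (𝔾.inv h) h g (𝔾.d_inv h) hd, 𝔾.inv_mul, hd, 𝔾.r_mul]

theorem inv_mul_rev {h g : G} (hd : 𝔾.d h = 𝔾.r g) :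
    𝔾.inv (𝔾.mul h g) = 𝔾.mul (𝔾.inv g) (𝔾.inv h) := by
  set k := 𝔾.mul h g with hk
  have hdk : 𝔾.d k = 𝔾.d g := 𝔾.d_mul h g hd
  have hrk : 𝔾.r k = 𝔾.r h := 𝔾.r_mul' h g hd
  have step2 : 𝔾.mul g (𝔾.inv k) = 𝔾.inv h := by
    have hg : g = 𝔾.mul (𝔾.inv h) k := (cancel_left' 𝔾 hd).symm
    calc 𝔾.mul g (𝔾.inv k) = 𝔾.mul (𝔾.mul (𝔾.inv h) k) (𝔾.inv k) := by rw [← hg]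
    _ = 𝔾.mul (𝔾.inv h) (𝔾.mul k (𝔾.inv k)) := by
        refine 𝔾.mul_assoc' _ _ _ ?_ ?_
        · rw [𝔾.d_inv, hrk]
        · rw [𝔾.r_inv]
    _ = 𝔾.mul (𝔾.inv h) (𝔾.r k) := by rw [𝔾.mul_inv]
    _ = 𝔾.inv h := by rw [hrk, ← 𝔾.d_inv h, 𝔾.mul_d]
  calc 𝔾.inv k = 𝔾.mul (𝔾.r (𝔾.inv k)) (𝔾.inv k) := (𝔾.r_mul _).symm
  _ = 𝔾.mul (𝔾.mul (𝔾.inv g) g) (𝔾.inv k) := by rw [𝔾.r_inv, hdk, ← 𝔾.inv_mul g]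
  _ = 𝔾.mul (𝔾.inv g) (𝔾.mul g (𝔾.inv k)) := by
      refine 𝔾.mul_assoc' _ _ _ ?_ ?_
      · rw [𝔾.d_inv]
      · rw [𝔾.r_inv, hdk]
  _ = 𝔾.mul (𝔾.inv g) (𝔾.inv h) := by rw [step2]

theorem mul_k_inv {h g : G} (hd : 𝔾.d h = 𝔾.r g) :
    𝔾.mul (𝔾.mul h g) (𝔾.inv g) = h := by
  rw [𝔾.mul_assoc' h g (𝔾.inv g) hd (𝔾.r_inv g).symm, 𝔾.mul_inv, ← hd, 𝔾.mul_d]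

theorem not_isId_conj {h g : G} (hr : 𝔾.r h = 𝔾.r g) (hne : h ≠ g) :
    ¬ 𝔾.isId (𝔾.mul (𝔾.inv h) g) := by
  intro hid
  set k := 𝔾.mul (𝔾.inv h) g with hk
  have hdinvh : 𝔾.d (𝔾.inv h) = 𝔾.r g := by rw [𝔾.d_inv]; exact hr
  have hrk : 𝔾.r k = 𝔾.d h := by rw [hk, 𝔾.r_mul' _ _ hdinvh, 𝔾.r_inv]
  have hkk : k = 𝔾.d h := by rw [← r_of_isId 𝔾 hid, hrk]
  have : g = h := by
    have := cancel_left 𝔾 hr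
    rw [← hk, hkk, 𝔾.mul_d] at this
    exact this.symm
  exact hne this.symm

end Groupoid
end PGaux
namespace PGaux
section Action
variable {G : Type u} {R : Type u} [Ring R] {𝔾 : AlgGroupoid G}
  {α : PartialGroupoidAction 𝔾 R (Set.univ : Set R)} {one : G → R}
  (hone : ∀ g, IsIdentityElem (one g) (α.D g))
  (hcentral : ∀ g (x : R), one g * x = x * one g)

include hone

theorem one_mem (g : G) : one g ∈ α.D g := (hone g).1

omit hone in
theorem memD_r {g : G} {x : R} (hx : x ∈ α.D g) : x ∈ α.D (𝔾.r g) := (α.ideal g).subset hx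

theorem one_mul_of_mem {g : G} {a : R} (ha : a ∈ α.D g) : one g * a = a := ((hone g).2 a ha).1
theorem mul_one_of_mem {g : G} {a : R} (ha : a ∈ α.D g) : a * one g = a := ((hone g).2 a ha).2

theorem mul_one_memD (x : R) (g : G) : x * one g ∈ α.D g := by
  have h1 : x * one (𝔾.r g) ∈ α.D (𝔾.r g) :=
    (α.ideal_r g).mul_mem_left trivial (one_mem hone (𝔾.r g))
  have h2 : x * one g = (x * one (𝔾.r g)) * one g := by
    rw [mul_assoc, one_mul_of_mem hone (memD_r (one_mem hone g))]
  rw [h2]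
  exact (α.ideal g).mul_mem_left h1 (one_mem hone g)

include hcentral in
theorem one_mul_memD (x : R) (g : G) : one g * x ∈ α.D g := by
  rw [hcentral]; exact mul_one_memD hone x g

include hcentral in
theorem mul_memD_right {g : G} {a : R} (ha : a ∈ α.D g) (x : R) : a * x ∈ α.D g := by
  have h1 : a * x = a * (x * one (𝔾.r g)) := by
    conv_lhs => rw [← mul_one_of_mem hone (memD_r ha), mul_assoc, hcentral]
  rw [h1]
  exact (α.ideal g).mul_mem_right ha (mul_one_memD hone x (𝔾.r g))

theorem mul_memD_left {g : G} {a : R} (ha : a ∈ α.D g) (x : R) : x * a ∈ α.D g := by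
  have h1 : x * a = (x * one (𝔾.r g)) * a := by
    rw [mul_assoc, one_mul_of_mem hone (memD_r ha)]
  rw [h1]
  exact (α.ideal g).mul_mem_left (mul_one_memD hone x (𝔾.r g)) ha

omit hone

theorem zero_memD (g : G) : (0 : R) ∈ α.D g := (α.ideal g).zero_mem

theorem actMapsTo {g : G} {x : R} (hx : x ∈ α.D (𝔾.inv g)) : α.act g x ∈ α.D g :=
  (α.bijOn g).mapsTo hx

theorem act_zero (g : G) : α.act g 0 = 0 := by
  have := α.map_add g 0 (zero_memD (α := α) (𝔾.inv g)) 0 (zero_memD (α := α) (𝔾.inv g))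
  rw [add_zero] at this
  exact left_eq_add.mp this

theorem act_act_inv {g : G} {y : R} (hy : y ∈ α.D g) :
    α.act g (α.act (𝔾.inv g) y) = y := by
  have hy' : y ∈ α.D (𝔾.inv (𝔾.inv g)) := by rwa [𝔾.inv_inv]
  have h1 : α.act (𝔾.inv g) y ∈ α.D (𝔾.inv g) := actMapsTo hy'
  have h2 := α.comp_cond g (𝔾.inv g) (𝔾.r_inv g).symm y hy' h1
  rw [h2, 𝔾.mul_inv]
  exact α.act_id _ (isId_r 𝔾 g) y (memD_r hy)

theorem act_inv_act {g : G} {x : R} (hx : x ∈ α.D (𝔾.inv g)) :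
    α.act (𝔾.inv g) (α.act g x) = x := by
  have := act_act_inv (α := α) (g := 𝔾.inv g) (y := x) hx
  rwa [𝔾.inv_inv] at this

theorem memD_sum {g : G} {ι' : Type*} (s : Finset ι') (f : ι' → R)
    (hf : ∀ i ∈ s, f i ∈ α.D g) : (∑ i ∈ s, f i) ∈ α.D g := by
  classical
  induction s using Finset.induction_on with
  | empty => simpa using zero_memD (α := α) g
  | insert _ _ hnot ih =>
    rename_i a s
    rw [Finset.sum_insert hnot]
    exact (α.ideal g).add_mem (hf a (Finset.mem_insert_self a s))
      (ih fun i hi => hf i (Finset.mem_insert_of_mem hi))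

theorem act_sum {g : G} {ι' : Type*} (s : Finset ι') (f : ι' → R)
    (hf : ∀ i ∈ s, f i ∈ α.D (𝔾.inv g)) :
    α.act g (∑ i ∈ s, f i) = ∑ i ∈ s, α.act g (f i) := by
  classical
  induction s using Finset.induction_on with
  | empty => simpa using act_zero (α := α) g
  | insert _ _ hnot ih =>
    rename_i a s
    rw [Finset.sum_insert hnot, Finset.sum_insert hnot,
      α.map_add g _ (hf a (Finset.mem_insert_self a s)) _
        (memD_sum s f fun i hi => hf i (Finset.mem_insert_of_mem hi)),
      ih fun i hi => hf i (Finset.mem_insert_of_mem hi)]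

include hone in
theorem act_one (g : G) : α.act g (one (𝔾.inv g)) = one g := by
  have hum : α.act g (one (𝔾.inv g)) ∈ α.D g := actMapsTo (one_mem hone (𝔾.inv g))
  have hgm : one g ∈ α.D (𝔾.inv (𝔾.inv g)) := by rw [𝔾.inv_inv]; exact one_mem hone g
  have hw : α.act (𝔾.inv g) (one g) ∈ α.D (𝔾.inv g) := actMapsTo hgm
  have h1 : α.act g (one (𝔾.inv g)) * one g = one g := by
    conv_lhs => rw [show one g = α.act g (α.act (𝔾.inv g) (one g)) from
      (act_act_inv (one_mem hone g)).symm]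
    rw [← α.map_mul g _ (one_mem hone (𝔾.inv g)) _ hw, one_mul_of_mem hone hw]
    exact act_act_inv (one_mem hone g)
  rw [← h1, mul_one_of_mem hone hum]

end Action
end PGaux
namespace PGaux
section Action2
variable {G : Type u} {R : Type u} [Ring R] {𝔾 : AlgGroupoid G}
  {α : PartialGroupoidAction 𝔾 R (Set.univ : Set R)} {one : G → R}
  (hone : ∀ g, IsIdentityElem (one g) (α.D g))
  (hcentral : ∀ g (x : R), one g * x = x * one g)
  (horth : ∀ e f, 𝔾.isId e → 𝔾.isId f → e ≠ f → ∀ x ∈ α.D e, ∀ y ∈ α.D f, x * y = 0)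

include horth in
theorem horth' {g h : G} (hne : 𝔾.r g ≠ 𝔾.r h) {a b : R}
    (ha : a ∈ α.D g) (hb : b ∈ α.D h) : a * b = 0 :=
  horth _ _ (isId_r 𝔾 g) (isId_r 𝔾 h) hne a (memD_r ha) b (memD_r hb)

include hone in
theorem one_idem (e : G) : one e * one e = one e := mul_one_of_mem hone (one_mem hone e)

include hone hcentral in
theorem jug1 (e : G) (a b : R) : (a * one e) * (b * one e) = a * b * one e := by
  calc (a * one e) * (b * one e) = a * (one e * b) * one e := by rw [mul_assoc, mul_assoc, mul_assoc]
  _ = a * (b * one e) * one e := by rw [hcentral]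
  _ = a * b * (one e * one e) := by rw [mul_assoc, mul_assoc, mul_assoc]
  _ = a * b * one e := by rw [one_idem hone]

include hcentral in
theorem jug2 (e f : G) (x : R) : x * one e * one f = x * one f * one e := by
  rw [mul_assoc, mul_assoc, ← hcentral]

theorem actD_inter {g h : G} (hgh : 𝔾.d g = 𝔾.r h) {x : R}
    (hx1 : x ∈ α.D (𝔾.inv g)) (hx2 : x ∈ α.D h) :
    α.act g x ∈ α.D (𝔾.mul g h) := by
  have hx2' : x ∈ α.D (𝔾.inv (𝔾.inv h)) := by rwa [𝔾.inv_inv]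
  have hz : α.act (𝔾.inv h) x ∈ α.D (𝔾.inv h) := actMapsTo hx2'
  have hhz : α.act h (α.act (𝔾.inv h) x) = x := act_act_inv hx2
  have mem2 : α.act h (α.act (𝔾.inv h) x) ∈ α.D (𝔾.inv g) := by rwa [hhz]
  have hdom := α.dom_cond g h hgh _ hz mem2
  have hcomp := α.comp_cond g h hgh _ hz mem2
  rw [hhz] at hcomp
  rw [hcomp]
  exact actMapsTo hdom

include hone hcentral in
theorem act_one_one {g h : G} (hgh : 𝔾.d g = 𝔾.r h) :
    α.act g (one (𝔾.inv g) * one h) = one g * one (𝔾.mul g h) := by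
  set a := one (𝔾.inv g) * one h with hadef
  have ham_g : a ∈ α.D (𝔾.inv g) := mul_memD_right hone hcentral (one_mem hone _) _
  have ham_h : a ∈ α.D h := mul_memD_left hone (one_mem hone h) _
  have hu1 : α.act g a ∈ α.D g := actMapsTo ham_g
  have hu2 : α.act g a ∈ α.D (𝔾.mul g h) := actD_inter hgh ham_g ham_h
  set v := one g * one (𝔾.mul g h) with hvdef
  have hv_g : v ∈ α.D g := mul_memD_right hone hcentral (one_mem hone g) _
  have hv_gh : v ∈ α.D (𝔾.mul g h) := mul_memD_left hone (one_mem hone _) _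
  have hv_g' : v ∈ α.D (𝔾.inv (𝔾.inv g)) := by rwa [𝔾.inv_inv]
  have hw1 : α.act (𝔾.inv g) v ∈ α.D (𝔾.inv g) := actMapsTo hv_g'
  have hw2 : α.act (𝔾.inv g) v ∈ α.D h := by
    have hd : 𝔾.d (𝔾.inv g) = 𝔾.r (𝔾.mul g h) := by
      rw [𝔾.d_inv, 𝔾.r_mul' g h hgh]
    have := actD_inter (α := α) hd hv_g' hv_gh
    rwa [cancel_left' 𝔾 hgh] at this
  have h1 : α.act g a * v = v := by
    conv_lhs => rw [show v = α.act g (α.act (𝔾.inv g) v) from (act_act_inv hv_g).symm]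
    rw [← α.map_mul g _ ham_g _ hw1]
    rw [show a * α.act (𝔾.inv g) v = α.act (𝔾.inv g) v from by
      rw [hadef, mul_assoc, one_mul_of_mem hone hw2, one_mul_of_mem hone hw1]]
    exact act_act_inv hv_g
  have h2 : α.act g a * v = α.act g a := by
    rw [hvdef, ← mul_assoc, mul_one_of_mem hone hu1, mul_one_of_mem hone hu2]
  rw [← h1, h2]

include hone hcentral in
theorem act_mul_one {g h : G} (hr : 𝔾.r g = 𝔾.r h) {b : R} (hb : b ∈ α.D (𝔾.inv g)) :
    α.act g b * one h = α.act g (b * one (𝔾.mul (𝔾.inv g) h)) := by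
  have hd : 𝔾.d (𝔾.inv g) = 𝔾.r h := by rw [𝔾.d_inv]; exact hr
  have s1 : α.act (𝔾.inv g) (one g * one h) = one (𝔾.inv g) * one (𝔾.mul (𝔾.inv g) h) := by
    have := act_one_one (α := α) hone hcentral hd
    rwa [𝔾.inv_inv] at this
  have hgh_mem : one g * one h ∈ α.D g := mul_memD_right hone hcentral (one_mem hone g) _
  have hgh_mem' : one g * one h ∈ α.D (𝔾.inv (𝔾.inv g)) := by rwa [𝔾.inv_inv]
  calc α.act g b * one h = (α.act g b * one g) * one h := by
        rw [mul_one_of_mem hone (actMapsTo hb)]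
  _ = α.act g b * (one g * one h) := by rw [mul_assoc]
  _ = α.act g b * α.act g (α.act (𝔾.inv g) (one g * one h)) := by
        rw [act_act_inv hgh_mem]
  _ = α.act g (b * α.act (𝔾.inv g) (one g * one h)) := by
        rw [← α.map_mul g _ hb _ (actMapsTo hgh_mem')]
  _ = α.act g (b * (one (𝔾.inv g) * one (𝔾.mul (𝔾.inv g) h))) := by rw [s1]
  _ = α.act g ((b * one (𝔾.inv g)) * one (𝔾.mul (𝔾.inv g) h)) := by rw [mul_assoc]
  _ = α.act g (b * one (𝔾.mul (𝔾.inv g) h)) := by rw [mul_one_of_mem hone hb]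

include hone hcentral in
theorem key_term {h g : G} (hhg : 𝔾.d h = 𝔾.r g) (cg : R) (x : R) :
    α.act h (cg * α.act g (x * one (𝔾.inv g)) * one (𝔾.inv h)) =
      (α.act h (cg * one (𝔾.inv h)) * one (𝔾.mul h g)) *
        α.act (𝔾.mul h g) (x * one (𝔾.inv (𝔾.mul h g))) := by
  set k := 𝔾.mul h g with hk
  set b := x * one (𝔾.inv g) with hbdef
  have hb : b ∈ α.D (𝔾.inv g) := mul_one_memD hone x _
  have hrinvh : 𝔾.r g = 𝔾.r (𝔾.inv h) := by rw [𝔾.r_inv]; exact hhg.symm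
  have hminv : 𝔾.mul (𝔾.inv g) (𝔾.inv h) = 𝔾.inv k := (inv_mul_rev 𝔾 hhg).symm
  have step4 : α.act g b * one (𝔾.inv h) = α.act g (b * one (𝔾.inv k)) := by
    rw [act_mul_one hone hcentral hrinvh hb, hminv]
  have hb1 : b * one (𝔾.inv k) ∈ α.D (𝔾.inv g) := mul_memD_right hone hcentral hb _
  have hB2 : α.act g (b * one (𝔾.inv k)) ∈ α.D (𝔾.inv h) := by
    rw [← step4]; exact mul_one_memD hone _ _
  have comp := α.comp_cond h g hhg _ hb1 hB2
  have hA : cg * one (𝔾.inv h) ∈ α.D (𝔾.inv h) := mul_one_memD hone cg _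
  have hB : α.act g b * one (𝔾.inv h) ∈ α.D (𝔾.inv h) := mul_one_memD hone _ _
  have hAB : cg * α.act g b * one (𝔾.inv h) =
      (cg * one (𝔾.inv h)) * (α.act g b * one (𝔾.inv h)) := by
    rw [jug1 hone hcentral]
  -- rewrite b1 as a product of two members of D (inv k)
  have hsplit : b * one (𝔾.inv k) =
      (x * one (𝔾.inv k)) * (one (𝔾.inv k) * one (𝔾.inv g)) := by
    rw [hbdef]
    calc x * one (𝔾.inv g) * one (𝔾.inv k)
        = x * one (𝔾.inv k) * one (𝔾.inv g) := jug2 hcentral _ _ _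
    _ = x * one (𝔾.inv k) * (one (𝔾.inv k) * one (𝔾.inv g)) := by
        conv_rhs => rw [← mul_assoc, mul_assoc x, one_idem hone]
  have hmem1 : x * one (𝔾.inv k) ∈ α.D (𝔾.inv k) := mul_one_memD hone x _
  have hmem2 : one (𝔾.inv k) * one (𝔾.inv g) ∈ α.D (𝔾.inv k) :=
    mul_memD_right hone hcentral (one_mem hone _) _
  have hu : α.act k (one (𝔾.inv k) * one (𝔾.inv g)) = one k * one h := by
    have hdk : 𝔾.d k = 𝔾.r (𝔾.inv g) := by rw [𝔾.r_inv, hk, 𝔾.d_mul h g hhg]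
    rw [act_one_one hone hcentral hdk, mul_k_inv 𝔾 hhg]
  have hP : α.act k (x * one (𝔾.inv k)) ∈ α.D k := actMapsTo hmem1
  have hhA : α.act h (cg * one (𝔾.inv h)) ∈ α.D h := actMapsTo hA
  calc α.act h (cg * α.act g b * one (𝔾.inv h))
      = α.act h ((cg * one (𝔾.inv h)) * (α.act g b * one (𝔾.inv h))) := by rw [hAB]
  _ = α.act h (cg * one (𝔾.inv h)) * α.act h (α.act g b * one (𝔾.inv h)) :=
      α.map_mul h _ hA _ hB
  _ = α.act h (cg * one (𝔾.inv h)) * α.act k (b * one (𝔾.inv k)) := by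
      rw [step4, comp]
  _ = α.act h (cg * one (𝔾.inv h)) *
        (α.act k (x * one (𝔾.inv k)) * (one k * one h)) := by
      rw [hsplit, α.map_mul k _ hmem1 _ hmem2, hu]
  _ = α.act h (cg * one (𝔾.inv h)) *
        (α.act k (x * one (𝔾.inv k)) * one k * one h) := by noncomm_ring
  _ = α.act h (cg * one (𝔾.inv h)) *
        (one k * α.act k (x * one (𝔾.inv k)) * one h) := by rw [hcentral k]
  _ = α.act h (cg * one (𝔾.inv h)) *
        (one k * (α.act k (x * one (𝔾.inv k)) * one h)) := by noncomm_ring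
  _ = α.act h (cg * one (𝔾.inv h)) *
        (one k * (one h * α.act k (x * one (𝔾.inv k)))) := by rw [hcentral h]
  _ = α.act h (cg * one (𝔾.inv h)) * one k * one h * α.act k (x * one (𝔾.inv k)) := by
      noncomm_ring
  _ = α.act h (cg * one (𝔾.inv h)) * one h * one k * α.act k (x * one (𝔾.inv k)) := by
      rw [jug2 hcentral]
  _ = (α.act h (cg * one (𝔾.inv h)) * one k) * α.act k (x * one (𝔾.inv k)) := by
      rw [mul_one_of_mem hone hhA]

end Action2
end PGaux
namespace PGaux
section Sums
variable {G : Type u} [Fintype G] [DecidableEq G] {R : Type u} [Ring R] {𝔾 : AlgGroupoid G}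
  {α : PartialGroupoidAction 𝔾 R (Set.univ : Set R)} {one : G → R}
  (hone : ∀ g, IsIdentityElem (one g) (α.D g))
  (hcentral : ∀ g (x : R), one g * x = x * one g)
  (horth : ∀ e f, 𝔾.isId e → 𝔾.isId f → e ≠ f → ∀ x ∈ α.D e, ∀ y ∈ α.D f, x * y = 0)

/-- Reindexing a sum supported on `{g | r g = d h}` via `g ↦ hg`. -/
theorem sum_reindex (h : G) (F H : G → R)
    (hF0 : ∀ g, 𝔾.r g ≠ 𝔾.d h → F g = 0)
    (hH0 : ∀ k, 𝔾.r k ≠ 𝔾.r h → H k = 0)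
    (hmatch : ∀ g, 𝔾.r g = 𝔾.d h → F g = H (𝔾.mul h g)) :
    ∑ g, F g = ∑ k, H k := by
  have e1 : ∑ g ∈ Finset.univ.filter (fun g => 𝔾.r g = 𝔾.d h), F g = ∑ g, F g :=
    Finset.sum_filter_of_ne (fun x _ hx => by by_contra hc; exact hx (hF0 x hc))
  have e2 : ∑ k ∈ Finset.univ.filter (fun k => 𝔾.r k = 𝔾.r h), H k = ∑ k, H k :=
    Finset.sum_filter_of_ne (fun x _ hx => by by_contra hc; exact hx (hH0 x hc))
  rw [← e1, ← e2]
  refine Finset.sum_nbij' (fun g => 𝔾.mul h g) (fun k => 𝔾.mul (𝔾.inv h) k) ?_ ?_ ?_ ?_ ?_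
  · intro a ha
    simp only [Finset.mem_filter, Finset.mem_univ, true_and] at ha ⊢
    exact 𝔾.r_mul' h a ha.symm
  · intro a ha
    simp only [Finset.mem_filter, Finset.mem_univ, true_and] at ha ⊢
    rw [𝔾.r_mul' (𝔾.inv h) a (by rw [𝔾.d_inv]; exact ha.symm), 𝔾.r_inv]
  · intro a ha
    simp only [Finset.mem_filter, Finset.mem_univ, true_and] at ha
    exact cancel_left' 𝔾 ha.symm
  · intro a ha
    simp only [Finset.mem_filter, Finset.mem_univ, true_and] at ha
    exact cancel_left 𝔾 ha.symm
  · intro a ha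
    simp only [Finset.mem_filter, Finset.mem_univ, true_and] at ha
    exact hmatch a ha

include hone hcentral horth in
theorem trace_invariant (x : R) : traceMap 𝔾 α one x ∈ invariants 𝔾 α one := by
  intro h
  have hsum : traceMap 𝔾 α one x * one (𝔾.inv h) =
      ∑ g, α.act g (x * one (𝔾.inv g)) * one (𝔾.inv h) := Finset.sum_mul _ _ _
  rw [hsum, act_sum (α := α) _ _ (fun g _ => mul_one_memD hone _ _)]
  have htx : traceMap 𝔾 α one x * one h = ∑ k, α.act k (x * one (𝔾.inv k)) * one h :=
    Finset.sum_mul _ _ _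
  rw [htx]
  refine sum_reindex (𝔾 := 𝔾) h _ _ ?_ ?_ ?_
  · intro g hne
    rw [horth' horth (h := 𝔾.inv h) (by rwa [𝔾.r_inv])
      (actMapsTo (mul_one_memD hone x _)) (one_mem hone _), act_zero]
  · intro k hne
    exact horth' horth hne (actMapsTo (mul_one_memD hone x _)) (one_mem hone _)
  · intro g hrg
    have hhg : 𝔾.d h = 𝔾.r g := hrg.symm
    set k := 𝔾.mul h g with hk
    have e1 : α.act g (x * one (𝔾.inv g)) * one (𝔾.inv h) =
        one g * α.act g (x * one (𝔾.inv g)) * one (𝔾.inv h) := by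
      rw [one_mul_of_mem hone (actMapsTo (mul_one_memD hone x _))]
    rw [e1, key_term hone hcentral hhg (one g) x]
    have e2 : α.act h (one g * one (𝔾.inv h)) = one h * one k := by
      rw [hcentral g, act_one_one hone hcentral hhg]
    rw [e2]
    have hP : α.act k (x * one (𝔾.inv k)) ∈ α.D k := actMapsTo (mul_one_memD hone x _)
    calc one h * one k * one k * α.act k (x * one (𝔾.inv k))
        = one h * (one k * one k * α.act k (x * one (𝔾.inv k))) := by noncomm_ring
    _ = one h * (one k * α.act k (x * one (𝔾.inv k))) := by
        rw [one_idem hone]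
    _ = one h * α.act k (x * one (𝔾.inv k)) := by
        rw [one_mul_of_mem hone hP]
    _ = α.act k (x * one (𝔾.inv k)) * one h := hcentral h _

include hone in
theorem trace_add (x y : R) :
    traceMap 𝔾 α one (x + y) = traceMap 𝔾 α one x + traceMap 𝔾 α one y := by
  unfold traceMap
  rw [← Finset.sum_add_distrib]
  refine Finset.sum_congr rfl fun g _ => ?_
  rw [add_mul, α.map_add g _ (mul_one_memD hone x _) _ (mul_one_memD hone y _)]

include hone hcentral in
theorem trace_mul_inv (z : R) {rr : R} (hrr : rr ∈ invariants 𝔾 α one) :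
    traceMap 𝔾 α one (z * rr) = traceMap 𝔾 α one z * rr := by
  unfold traceMap
  rw [Finset.sum_mul]
  refine Finset.sum_congr rfl fun g _ => ?_
  have e1 : z * rr * one (𝔾.inv g) = (z * one (𝔾.inv g)) * (rr * one (𝔾.inv g)) := by
    calc z * rr * one (𝔾.inv g) = z * rr * (one (𝔾.inv g) * one (𝔾.inv g)) := by
          rw [one_idem hone]
    _ = z * (rr * one (𝔾.inv g)) * one (𝔾.inv g) := by noncomm_ring
    _ = z * (one (𝔾.inv g) * rr) * one (𝔾.inv g) := by rw [hcentral]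
    _ = (z * one (𝔾.inv g)) * (rr * one (𝔾.inv g)) := by noncomm_ring
  rw [e1, α.map_mul g _ (mul_one_memD hone z _) _ (mul_one_memD hone rr _), hrr g]
  have hz : α.act g (z * one (𝔾.inv g)) ∈ α.D g := actMapsTo (mul_one_memD hone z _)
  calc α.act g (z * one (𝔾.inv g)) * (rr * one g)
      = α.act g (z * one (𝔾.inv g)) * (one g * rr) := by rw [hcentral]
  _ = α.act g (z * one (𝔾.inv g)) * one g * rr := by noncomm_ring
  _ = α.act g (z * one (𝔾.inv g)) * rr := by rw [mul_one_of_mem hone hz]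

include hone in
theorem act_id' {e : G} (he : 𝔾.isId e) (x : R) :
    α.act e (x * one (𝔾.inv e)) = x * one e := by
  rw [inv_of_isId 𝔾 he]
  exact α.act_id e he _ (mul_one_memD hone x e)

include hone hcentral in
theorem id_family (hunit : (1 : R) = ∑ e ∈ Finset.univ.filter (fun e => 𝔾.isId e), one e)
    (x : R) :
    ∑ g, (if 𝔾.isId g then one g else 0) * α.act g (x * one (𝔾.inv g)) = x := by
  classical
  rw [Finset.sum_congr rfl (fun g _ => ite_mul (𝔾.isId g) (one g) 0 _), ]
  simp only [zero_mul]
  rw [← Finset.sum_filter]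
  have : ∀ g ∈ Finset.univ.filter (fun e => 𝔾.isId e),
      one g * α.act g (x * one (𝔾.inv g)) = x * one g := by
    intro g hg
    simp only [Finset.mem_filter, Finset.mem_univ, true_and] at hg
    rw [act_id' hone hg, one_mul_of_mem hone (mul_one_memD hone x g)]
  rw [Finset.sum_congr rfl this, ← Finset.mul_sum, ← hunit, mul_one]

end Sums
end PGaux
namespace PGaux
section Galois
variable {G : Type u} [Fintype G] [DecidableEq G] {R : Type u} [Ring R] {𝔾 : AlgGroupoid G}
  {α : PartialGroupoidAction 𝔾 R (Set.univ : Set R)} {one : G → R}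
  (hone : ∀ g, IsIdentityElem (one g) (α.D g))
  (hcentral : ∀ g (x : R), one g * x = x * one g)
  (horth : ∀ e f, 𝔾.isId e → 𝔾.isId f → e ≠ f → ∀ x ∈ α.D e, ∀ y ∈ α.D f, x * y = 0)
  (hunit : (1 : R) = ∑ e ∈ Finset.univ.filter (fun e => 𝔾.isId e), one e)
  {n : ℕ} {xs ys : Fin n → R}
  (hG : ∀ g : G, ∑ i, xs i * α.act g (ys i * one (𝔾.inv g)) = if 𝔾.isId g then one g else 0)

include hone hcentral in
theorem split_ones (e f : G) (x : R) :
    x * one e * one f = (x * one f) * (one f * one e) := by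
  calc x * one e * one f = x * one f * one e := jug2 hcentral _ _ _
  _ = (x * one f) * (one f * one e) := by
      conv_rhs => rw [← mul_assoc, mul_assoc x, one_idem hone]

include hone hunit hG in
theorem sum_xy_one : (∑ i, xs i * ys i) = 1 := by
  have key : ∀ e ∈ Finset.univ.filter (fun e => 𝔾.isId e),
      (∑ i, xs i * ys i) * one e = one e := by
    intro e he
    simp only [Finset.mem_filter, Finset.mem_univ, true_and] at he
    calc (∑ i, xs i * ys i) * one e = ∑ i, xs i * ys i * one e := Finset.sum_mul _ _ _
    _ = ∑ i, xs i * α.act e (ys i * one (𝔾.inv e)) := by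
        refine Finset.sum_congr rfl fun i _ => ?_
        rw [act_id' hone he, mul_assoc]
    _ = one e := by rw [hG e, if_pos he]
  calc (∑ i, xs i * ys i) = (∑ i, xs i * ys i) * 1 := (mul_one _).symm
  _ = ∑ e ∈ Finset.univ.filter (fun e => 𝔾.isId e), (∑ i, xs i * ys i) * one e := by
      rw [hunit, Finset.mul_sum]
  _ = ∑ e ∈ Finset.univ.filter (fun e => 𝔾.isId e), one e := Finset.sum_congr rfl key
  _ = 1 := hunit.symm

include hone hcentral hunit hG in
theorem trace_dual (x : R) : ∑ i, xs i * traceMap 𝔾 α one (ys i * x) = x := by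
  have e1 : ∀ i, xs i * traceMap 𝔾 α one (ys i * x) =
      ∑ g, xs i * (α.act g (ys i * one (𝔾.inv g)) * α.act g (x * one (𝔾.inv g))) := by
    intro i
    unfold traceMap
    rw [Finset.mul_sum]
    refine Finset.sum_congr rfl fun g _ => ?_
    have e2 : ys i * x * one (𝔾.inv g) = (ys i * one (𝔾.inv g)) * (x * one (𝔾.inv g)) :=
      (jug1 hone hcentral _ _ _).symm
    rw [e2, α.map_mul g _ (mul_one_memD hone _ _) _ (mul_one_memD hone _ _)]
  rw [Finset.sum_congr rfl fun i _ => e1 i, Finset.sum_comm]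
  have e3 : ∀ g, ∑ i, xs i * (α.act g (ys i * one (𝔾.inv g)) * α.act g (x * one (𝔾.inv g)))
      = (if 𝔾.isId g then one g else 0) * α.act g (x * one (𝔾.inv g)) := by
    intro g
    rw [← hG g, Finset.sum_mul]
    refine Finset.sum_congr rfl fun i _ => ?_
    rw [mul_assoc]
  rw [Finset.sum_congr rfl fun g _ => e3 g]
  exact id_family hone hcentral hunit x

include hone hcentral horth hunit hG in
theorem pair_sum (h g : G) :
    ∑ i, α.act h (xs i * one (𝔾.inv h)) * α.act g (ys i * one (𝔾.inv g)) =
      if h = g then one g else 0 := by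
  by_cases hhg : h = g
  · subst hhg
    rw [if_pos rfl]
    have e1 : ∀ i, α.act h (xs i * one (𝔾.inv h)) * α.act h (ys i * one (𝔾.inv h)) =
        α.act h ((xs i * one (𝔾.inv h)) * (ys i * one (𝔾.inv h))) := fun i =>
      (α.map_mul h _ (mul_one_memD hone _ _) _ (mul_one_memD hone _ _)).symm
    have e2 : ∑ i, (xs i * one (𝔾.inv h)) * (ys i * one (𝔾.inv h)) = one (𝔾.inv h) := by
      calc ∑ i, (xs i * one (𝔾.inv h)) * (ys i * one (𝔾.inv h))
          = ∑ i, xs i * ys i * one (𝔾.inv h) :=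
            Finset.sum_congr rfl fun i _ => jug1 hone hcentral _ _ _
      _ = (∑ i, xs i * ys i) * one (𝔾.inv h) := (Finset.sum_mul _ _ _).symm
      _ = one (𝔾.inv h) := by rw [sum_xy_one hone hunit hG, one_mul]
    calc ∑ i, α.act h (xs i * one (𝔾.inv h)) * α.act h (ys i * one (𝔾.inv h))
        = ∑ i, α.act h ((xs i * one (𝔾.inv h)) * (ys i * one (𝔾.inv h))) :=
          Finset.sum_congr rfl fun i _ => e1 i
    _ = α.act h (∑ i, (xs i * one (𝔾.inv h)) * (ys i * one (𝔾.inv h))) :=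
        (act_sum (g := h) Finset.univ
          (fun i => xs i * one (𝔾.inv h) * (ys i * one (𝔾.inv h)))
          (fun i _ => mul_memD_left hone (mul_one_memD hone _ _) _)).symm
    _ = α.act h (one (𝔾.inv h)) := by rw [e2]
    _ = one h := act_one hone h
  · rw [if_neg hhg]
    by_cases hrr : 𝔾.r h = 𝔾.r g
    · -- needs the full computation
      set k := 𝔾.mul (𝔾.inv h) g with hk
      have hndk : ¬ 𝔾.isId k := not_isId_conj 𝔾 hrr hhg
      have hdinvh : 𝔾.d (𝔾.inv h) = 𝔾.r g := by rw [𝔾.d_inv]; exact hrr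
      have hm : 𝔾.inv k = 𝔾.mul (𝔾.inv g) h := by
        rw [hk, inv_mul_rev 𝔾 hdinvh, 𝔾.inv_inv]
      have key : ∀ i, α.act h (xs i * one (𝔾.inv h)) * α.act g (ys i * one (𝔾.inv g)) =
          α.act h ((xs i * one (𝔾.inv h)) *
            (α.act k (ys i * one (𝔾.inv k)) * α.act k (one (𝔾.inv k) * one (𝔾.inv g)))) := by
        intro i
        set b := α.act g (ys i * one (𝔾.inv g)) with hb
        have hbD : b ∈ α.D g := actMapsTo (mul_one_memD hone _ _)
        have hbh : b * one h ∈ α.D h := mul_one_memD hone _ _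
        have haD : α.act h (xs i * one (𝔾.inv h)) ∈ α.D h :=
          actMapsTo (mul_one_memD hone _ _)
        have s1 : α.act h (xs i * one (𝔾.inv h)) * b =
            α.act h (xs i * one (𝔾.inv h)) * (b * one h) := by
          conv_lhs => rw [← mul_one_of_mem hone haD]
          rw [mul_assoc, hcentral]
        have s2 : b * one h = α.act g (ys i * one (𝔾.inv g) * one (𝔾.inv k)) := by
          rw [hb, act_mul_one hone hcentral (g := g) (h := h) hrr.symm
            (mul_one_memD hone _ _), ← hm]
        have harg : ys i * one (𝔾.inv g) * one (𝔾.inv k) ∈ α.D (𝔾.inv g) :=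
          mul_memD_right hone hcentral (mul_one_memD hone _ _) _
        have harg2 : α.act g (ys i * one (𝔾.inv g) * one (𝔾.inv k)) ∈
            α.D (𝔾.inv (𝔾.inv h)) := by
          rw [𝔾.inv_inv, ← s2]; exact hbh
        have s3 := α.comp_cond (𝔾.inv h) g hdinvh _ harg harg2
        have s4 : α.act k (ys i * one (𝔾.inv g) * one (𝔾.inv k)) =
            α.act k (ys i * one (𝔾.inv k)) * α.act k (one (𝔾.inv k) * one (𝔾.inv g)) := by
          rw [split_ones hone hcentral, α.map_mul k _ (mul_one_memD hone _ _) _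
            (mul_memD_right hone hcentral (one_mem hone _) _)]
        calc α.act h (xs i * one (𝔾.inv h)) * b
            = α.act h (xs i * one (𝔾.inv h)) * (b * one h) := s1
        _ = α.act h (xs i * one (𝔾.inv h)) *
              α.act h (α.act (𝔾.inv h) (b * one h)) := by rw [act_act_inv hbh]
        _ = α.act h ((xs i * one (𝔾.inv h)) * α.act (𝔾.inv h) (b * one h)) := by
            rw [← α.map_mul h _ (mul_one_memD hone _ _) _ (actMapsTo (by
              rw [𝔾.inv_inv]; exact hbh))]
        _ = α.act h ((xs i * one (𝔾.inv h)) *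
              (α.act k (ys i * one (𝔾.inv k)) * α.act k (one (𝔾.inv k) * one (𝔾.inv g)))) := by
            rw [s2, s3, ← hk, s4]
      have zero_inner : ∑ i, (xs i * one (𝔾.inv h)) *
          (α.act k (ys i * one (𝔾.inv k)) * α.act k (one (𝔾.inv k) * one (𝔾.inv g))) = 0 := by
        have e4 : ∀ i, (xs i * one (𝔾.inv h)) *
            (α.act k (ys i * one (𝔾.inv k)) * α.act k (one (𝔾.inv k) * one (𝔾.inv g))) =
            (xs i * α.act k (ys i * one (𝔾.inv k))) *
              (α.act k (one (𝔾.inv k) * one (𝔾.inv g)) * one (𝔾.inv h)) := by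
          intro i
          calc (xs i * one (𝔾.inv h)) *
              (α.act k (ys i * one (𝔾.inv k)) * α.act k (one (𝔾.inv k) * one (𝔾.inv g)))
              = xs i * (one (𝔾.inv h) *
                (α.act k (ys i * one (𝔾.inv k)) * α.act k (one (𝔾.inv k) * one (𝔾.inv g)))) := by
                noncomm_ring
          _ = xs i * ((α.act k (ys i * one (𝔾.inv k)) * α.act k (one (𝔾.inv k) * one (𝔾.inv g)))
                * one (𝔾.inv h)) := by rw [hcentral]
          _ = (xs i * α.act k (ys i * one (𝔾.inv k))) *
                (α.act k (one (𝔾.inv k) * one (𝔾.inv g)) * one (𝔾.inv h)) := by noncomm_ring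
        rw [Finset.sum_congr rfl fun i _ => e4 i, ← Finset.sum_mul, hG k, if_neg hndk,
          zero_mul]
      calc ∑ i, α.act h (xs i * one (𝔾.inv h)) * α.act g (ys i * one (𝔾.inv g))
          = ∑ i, α.act h ((xs i * one (𝔾.inv h)) *
              (α.act k (ys i * one (𝔾.inv k)) * α.act k (one (𝔾.inv k) * one (𝔾.inv g)))) :=
            Finset.sum_congr rfl fun i _ => key i
      _ = α.act h (∑ i, (xs i * one (𝔾.inv h)) *
            (α.act k (ys i * one (𝔾.inv k)) * α.act k (one (𝔾.inv k) * one (𝔾.inv g)))) :=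
          (act_sum (g := h) Finset.univ
            (fun i => xs i * one (𝔾.inv h) *
              (α.act k (ys i * one (𝔾.inv k)) * α.act k (one (𝔾.inv k) * one (𝔾.inv g))))
            (fun i _ => mul_memD_right hone hcentral (mul_one_memD hone _ _) _)).symm
      _ = α.act h 0 := by rw [zero_inner]
      _ = 0 := act_zero h
    · refine Finset.sum_eq_zero fun i _ => ?_
      exact horth' horth hrr (actMapsTo (mul_one_memD hone _ _))
        (actMapsTo (mul_one_memD hone _ _))

include hone hcentral horth hunit hG in
theorem recovery (c : G → R) (g : G) :
    ∑ i, (∑ h, c h * α.act h (xs i * one (𝔾.inv h))) * α.act g (ys i * one (𝔾.inv g)) =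
      c g * one g := by
  have e1 : ∀ i, (∑ h, c h * α.act h (xs i * one (𝔾.inv h))) * α.act g (ys i * one (𝔾.inv g))
      = ∑ h, c h * (α.act h (xs i * one (𝔾.inv h)) * α.act g (ys i * one (𝔾.inv g))) := by
    intro i
    rw [Finset.sum_mul]
    exact Finset.sum_congr rfl fun h _ => mul_assoc _ _ _
  rw [Finset.sum_congr rfl fun i _ => e1 i, Finset.sum_comm]
  have e2 : ∀ h, ∑ i, c h * (α.act h (xs i * one (𝔾.inv h)) * α.act g (ys i * one (𝔾.inv g)))
      = if h = g then c h * one g else 0 := by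
    intro h
    rw [← Finset.mul_sum, pair_sum hone hcentral horth hunit hG h g]
    by_cases hhg : h = g
    · rw [if_pos hhg, if_pos hhg]
    · rw [if_neg hhg, if_neg hhg, mul_zero]
  rw [Finset.sum_congr rfl fun h _ => e2 h, Finset.sum_ite_eq' Finset.univ g
    (fun h => c h * one g), if_pos (Finset.mem_univ g)]

end Galois
end PGaux
namespace PGaux
theorem sub_memD {G : Type u} {R : Type u} [Ring R] {𝔾 : AlgGroupoid G}
    {α : PartialGroupoidAction 𝔾 R (Set.univ : Set R)} {g : G} {a b : R}
    (ha : a ∈ α.D g) (hb : b ∈ α.D g) : a - b ∈ α.D g := by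
  rw [sub_eq_add_neg]
  exact (α.ideal g).add_mem ha ((α.ideal g).neg_mem hb)
end PGaux
/-- **Theorem 5.3 (i) ⇔ (ii)**: under the standing hypotheses, `R` is an
`α`-partial Galois extension of `R^α` if and only if `R` is a finitely
generated projective right `R^α`-module and the map
`j : R⋆_αG → End(R)_{R^α}`, `j(∑ a_g δ_g)(x) = ∑ a_g α_g(x 1_{g⁻¹})`, is an
isomorphism of rings and of left `R`-modules (here `S` is a ring isomorphic,
via `ι`, to `R^α`, bijectivity of `j` is expressed through coefficients, and
surjectivity targets the additive right-`R^α`-linear endomorphisms of `R`). -/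
theorem partial_galois_iff_projective_and_j_iso {G : Type u} [Nonempty G] [Fintype G]
    [DecidableEq G] (𝔾 : AlgGroupoid G) {R : Type u} [Ring R]
    (α : PartialGroupoidAction 𝔾 R (Set.univ : Set R))
    (one : G → R) (hone : ∀ g, IsIdentityElem (one g) (α.D g))
    (hcentral : ∀ g (x : R), one g * x = x * one g)
    (horth : ∀ e f, 𝔾.isId e → 𝔾.isId f → e ≠ f → ∀ x ∈ α.D e, ∀ y ∈ α.D f, x * y = 0)
    (hunit : (1 : R) = ∑ e ∈ Finset.univ.filter (fun e => 𝔾.isId e), one e)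
    (S : Type u) [Ring S] (ι : S →+* R) (hι : Function.Injective ι)
    (hrange : Set.range ι = invariants 𝔾 α one)
    [Module Sᵐᵒᵖ R]
    (hsmul : ∀ (s : S) (x : R), (MulOpposite.op s) • x = x * ι s) :
    IsPartialGalois 𝔾 α one ↔
      (Module.Finite Sᵐᵒᵖ R ∧ Module.Projective Sᵐᵒᵖ R ∧
        (∀ c : G → R, (∀ g, c g ∈ α.D g) →
          (∀ x : R, ∑ g : G, c g * α.act g (x * one (𝔾.inv g)) = 0) → ∀ g, c g = 0) ∧
        (∀ f : R → R, (∀ x y : R, f (x + y) = f x + f y) →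
          (∀ x : R, ∀ r ∈ invariants 𝔾 α one, f (x * r) = f x * r) →
          ∃ c : G → R, (∀ g, c g ∈ α.D g) ∧
            ∀ x : R, f x = ∑ g : G, c g * α.act g (x * one (𝔾.inv g)))) := by
  open PGaux in
  classical
  have hinvmem : ∀ z : R, z ∈ invariants 𝔾 α one → ∃ s : S, ι s = z := by
    intro z hz
    rw [← hrange] at hz
    exact hz
  have hιinv : ∀ u : S, ι u ∈ invariants 𝔾 α one := by
    intro u
    rw [← hrange]
    exact ⟨u, rfl⟩
  constructor
  · rintro ⟨n, xs, ys, hG⟩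
    have hinv : ∀ z : R, traceMap 𝔾 α one z ∈ invariants 𝔾 α one :=
      trace_invariant hone hcentral horth
    have hTex : ∀ z : R, ∃ s : S, ι s = traceMap 𝔾 α one z := fun z => hinvmem _ (hinv z)
    choose T hT using hTex
    have hTadd : ∀ a b : R, T (a + b) = T a + T b := by
      intro a b
      apply hι
      rw [map_add, hT, hT, hT, trace_add hone]
    have hTmul : ∀ (z : R) (u : S), T (z * ι u) = T z * u := by
      intro z u
      apply hι
      rw [map_mul, hT, hT, trace_mul_inv hone hcentral z (hιinv u)]
    -- the splitting maps
    set σ : R →ₗ[Sᵐᵒᵖ] (Fin n → Sᵐᵒᵖ) :=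
      { toFun := fun x k => MulOpposite.op (T (ys k * x))
        map_add' := by
          intro a b
          funext k
          simp only [Pi.add_apply, mul_add, hTadd, MulOpposite.op_add]
        map_smul' := by
          intro s x
          funext k
          have h1 : s • x = x * ι s.unop := by
            conv_lhs => rw [← MulOpposite.op_unop s, hsmul]
          simp only [RingHom.id_apply, Pi.smul_apply, smul_eq_mul, h1, ← mul_assoc, hTmul,
            MulOpposite.op_mul, MulOpposite.op_unop] } with hσdef
    set π : (Fin n → Sᵐᵒᵖ) →ₗ[Sᵐᵒᵖ] R :=
      { toFun := fun w => ∑ k, w k • xs k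
        map_add' := by
          intro a b
          simp only [Pi.add_apply, add_smul, Finset.sum_add_distrib]
        map_smul' := by
          intro s w
          simp only [RingHom.id_apply, Pi.smul_apply, smul_eq_mul, mul_smul, Finset.smul_sum] }
      with hπdef
    have hsplit : ∀ x : R, π (σ x) = x := by
      intro x
      show (∑ k, MulOpposite.op (T (ys k * x)) • xs k) = x
      calc ∑ k, MulOpposite.op (T (ys k * x)) • xs k
          = ∑ k, xs k * ι (T (ys k * x)) := Finset.sum_congr rfl fun k _ => hsmul _ _
      _ = ∑ k, xs k * traceMap 𝔾 α one (ys k * x) := by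
          refine Finset.sum_congr rfl fun k _ => ?_
          rw [hT]
      _ = x := trace_dual hone hcentral hunit hG x
    refine ⟨?_, ?_, ?_, ?_⟩
    · exact Module.Finite.of_surjective π (fun x => ⟨σ x, hsplit x⟩)
    · exact Module.Projective.of_split σ π (LinearMap.ext hsplit)
    · intro c hc hzero g
      rw [← mul_one_of_mem hone (hc g), ← recovery hone hcentral horth hunit hG c g]
      refine Finset.sum_eq_zero fun i _ => ?_
      rw [hzero (xs i), zero_mul]
    · intro f hfadd hflin
      have hf0 : f 0 = 0 := by
        have := hfadd 0 0
        rw [add_zero] at this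
        exact (left_eq_add.mp this)
      have hfsum : ∀ (s : Finset (Fin n)) (F : Fin n → R),
          f (∑ i ∈ s, F i) = ∑ i ∈ s, f (F i) := by
        intro s F
        induction s using Finset.induction_on with
        | empty => simpa using hf0
        | insert _ _ hnot ih =>
          rename_i a s
          rw [Finset.sum_insert hnot, Finset.sum_insert hnot, hfadd, ih]
      refine ⟨fun g => ∑ i, f (xs i) * α.act g (ys i * one (𝔾.inv g)), ?_, ?_⟩
      · intro g
        exact memD_sum _ _ fun i _ =>
          mul_memD_left hone (actMapsTo (mul_one_memD hone _ _)) _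
      · intro x
        have e1 : ∀ g, (∑ i, f (xs i) * α.act g (ys i * one (𝔾.inv g))) *
            α.act g (x * one (𝔾.inv g)) =
            ∑ i, f (xs i) * α.act g (ys i * x * one (𝔾.inv g)) := by
          intro g
          rw [Finset.sum_mul]
          refine Finset.sum_congr rfl fun i _ => ?_
          rw [mul_assoc, ← α.map_mul g _ (mul_one_memD hone _ _) _ (mul_one_memD hone _ _),
            jug1 hone hcentral]
        rw [Finset.sum_congr rfl fun g _ => e1 g, Finset.sum_comm]
        have e2 : ∀ i, ∑ g, f (xs i) * α.act g (ys i * x * one (𝔾.inv g)) =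
            f (xs i * traceMap 𝔾 α one (ys i * x)) := by
          intro i
          rw [← Finset.mul_sum]
          have : (∑ g, α.act g (ys i * x * one (𝔾.inv g))) = traceMap 𝔾 α one (ys i * x) := rfl
          rw [this, hflin _ _ (hinv _)]
        rw [Finset.sum_congr rfl fun i _ => e2 i, ← hfsum, trace_dual hone hcentral hunit hG]
  · rintro ⟨hfin, hproj, hinj, hsurj⟩
    obtain ⟨n, v, hv⟩ := Module.Finite.exists_fin (R := Sᵐᵒᵖ) (M := R)
    set π : (Fin n → Sᵐᵒᵖ) →ₗ[Sᵐᵒᵖ] R :=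
      { toFun := fun w => ∑ k, w k • v k
        map_add' := by
          intro a b
          simp only [Pi.add_apply, add_smul, Finset.sum_add_distrib]
        map_smul' := by
          intro s w
          simp only [RingHom.id_apply, Pi.smul_apply, smul_eq_mul, mul_smul, Finset.smul_sum] }
      with hπdef
    have hπsurj : Function.Surjective π := by
      intro x
      have hx : x ∈ Submodule.span Sᵐᵒᵖ (Set.range v) := by rw [hv]; exact Submodule.mem_top
      rw [Submodule.mem_span_range_iff_exists_fun] at hx
      obtain ⟨c, hc⟩ := hx
      exact ⟨c, hc⟩
    obtain ⟨σ, hσ⟩ := Module.projective_lifting_property π LinearMap.id hπsurj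
    have hσx : ∀ x : R, (∑ k, σ x k • v k) = x := by
      intro x
      have := LinearMap.ext_iff.mp hσ x
      exact this
    -- the dual-basis "functionals"
    set f : Fin n → R → R := fun i x => ι (MulOpposite.unop (σ x i)) with hfdef
    have hfadd : ∀ i, ∀ x y : R, f i (x + y) = f i x + f i y := by
      intro i x y
      simp only [hfdef, map_add, Pi.add_apply, MulOpposite.unop_add]
    have hflin : ∀ i, ∀ x : R, ∀ r ∈ invariants 𝔾 α one, f i (x * r) = f i x * r := by
      intro i x r hr
      obtain ⟨u, hu⟩ := hinvmem r hr
      have h1 : x * r = (MulOpposite.op u) • x := by rw [hsmul, hu]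
      simp only [hfdef, h1, map_smul, Pi.smul_apply, smul_eq_mul, MulOpposite.unop_mul,
        MulOpposite.unop_op, map_mul, hu]
    have hfmem : ∀ i x, f i x ∈ invariants 𝔾 α one := by
      intro i x
      rw [← hrange]
      exact ⟨_, rfl⟩
    choose cc hc1 hc2 using fun i => hsurj (f i) (hfadd i) (hflin i)
    have hdual : ∀ x : R, (∑ i, v i * f i x) = x := by
      intro x
      conv_rhs => rw [← hσx x]
      refine Finset.sum_congr rfl fun i _ => ?_
      show v i * ι (MulOpposite.unop (σ x i)) = σ x i • v i
      conv_rhs => rw [← MulOpposite.op_unop (σ x i), hsmul]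
    set b : G → R := fun g => ∑ i, v i * cc i g with hbdef
    have hbmem : ∀ g, b g ∈ α.D g := fun g =>
      memD_sum _ _ fun i _ => mul_memD_left hone (hc1 i g) _
    set a : G → R := fun g => if 𝔾.isId g then one g else 0 with hadef
    have hamem : ∀ g, a g ∈ α.D g := by
      intro g
      rw [hadef]
      by_cases hg : 𝔾.isId g
      · simp only [if_pos hg]; exact one_mem hone g
      · simp only [if_neg hg]; exact zero_memD (α := α) g
    have hbx : ∀ x, ∑ g, b g * α.act g (x * one (𝔾.inv g)) = x := by
      intro x
      have e1 : ∀ g, b g * α.act g (x * one (𝔾.inv g)) =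
          ∑ i, v i * (cc i g * α.act g (x * one (𝔾.inv g))) := by
        intro g
        rw [hbdef, Finset.sum_mul]
        exact Finset.sum_congr rfl fun i _ => mul_assoc _ _ _
      rw [Finset.sum_congr rfl fun g _ => e1 g, Finset.sum_comm]
      have e2 : ∀ i, ∑ g, v i * (cc i g * α.act g (x * one (𝔾.inv g))) = v i * f i x := by
        intro i
        rw [← Finset.mul_sum, ← hc2 i x]
      rw [Finset.sum_congr rfl fun i _ => e2 i, hdual]
    have hax : ∀ x, ∑ g, a g * α.act g (x * one (𝔾.inv g)) = x := fun x =>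
      id_family hone hcentral hunit x
    have hba : ∀ g, b g = a g := by
      intro g
      have hz : ∀ x, ∑ g, (b g - a g) * α.act g (x * one (𝔾.inv g)) = 0 := by
        intro x
        have e : ∀ g, (b g - a g) * α.act g (x * one (𝔾.inv g)) =
            b g * α.act g (x * one (𝔾.inv g)) - a g * α.act g (x * one (𝔾.inv g)) :=
          fun g => sub_mul _ _ _
        rw [Finset.sum_congr rfl fun g _ => e g, Finset.sum_sub_distrib, hbx, hax, sub_self]
      exact sub_eq_zero.mp
        (hinj (fun g => b g - a g) (fun g => sub_memD (hbmem g) (hamem g)) hz g)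
    -- the coefficients come from a single element via the action
    have hkey : ∀ i h, cc i h = α.act h (cc i (𝔾.d h) * one (𝔾.inv h)) := by
      intro i h
      set C : G → R := fun k => if 𝔾.r k = 𝔾.r h then
        α.act h (cc i (𝔾.mul (𝔾.inv h) k) * one (𝔾.inv h)) * one k else 0 with hCdef
      set C' : G → R := fun k => cc i k * one h with hC'def
      have hCmem : ∀ k, C k ∈ α.D k := by
        intro k
        rw [hCdef]
        by_cases hk : 𝔾.r k = 𝔾.r h
        · simp only [if_pos hk]; exact mul_one_memD hone _ _
        · simp only [if_neg hk]; exact zero_memD (α := α) k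
      have hC'mem : ∀ k, C' k ∈ α.D k := fun k => mul_memD_right hone hcentral (hc1 i k) _
      have claim1 : ∀ x, ∑ k, C k * α.act k (x * one (𝔾.inv k)) =
          α.act h (f i x * one (𝔾.inv h)) := by
        intro x
        have e0 : f i x * one (𝔾.inv h) =
            ∑ g, cc i g * α.act g (x * one (𝔾.inv g)) * one (𝔾.inv h) := by
          rw [hc2 i x, Finset.sum_mul]
        rw [e0, act_sum (α := α) _ _ (fun g _ => mul_one_memD hone _ _)]
        refine (sum_reindex (𝔾 := 𝔾) h _ _ ?_ ?_ ?_).symm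
        · intro g hne
          have hinner : cc i g * α.act g (x * one (𝔾.inv g)) ∈ α.D g :=
            mul_memD_right hone hcentral (hc1 i g) _
          rw [horth' horth (h := 𝔾.inv h) (by rwa [𝔾.r_inv]) hinner (one_mem hone _),
            act_zero]
        · intro k hne
          rw [hCdef]
          simp only [if_neg hne, zero_mul]
        · intro g hrg
          rw [key_term hone hcentral hrg.symm (cc i g) x, hCdef]
          have hrk : 𝔾.r (𝔾.mul h g) = 𝔾.r h := 𝔾.r_mul' h g hrg.symm
          simp only [if_pos hrk, cancel_left' 𝔾 hrg.symm]
      have claim2 : ∀ x, ∑ k, C' k * α.act k (x * one (𝔾.inv k)) = f i x * one h := by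
        intro x
        rw [hc2 i x, Finset.sum_mul]
        refine Finset.sum_congr rfl fun k _ => ?_
        rw [hC'def]
        calc cc i k * one h * α.act k (x * one (𝔾.inv k))
            = cc i k * (one h * α.act k (x * one (𝔾.inv k))) := mul_assoc _ _ _
        _ = cc i k * (α.act k (x * one (𝔾.inv k)) * one h) := by rw [hcentral]
        _ = cc i k * α.act k (x * one (𝔾.inv k)) * one h := (mul_assoc _ _ _).symm
      have hCC' : ∀ k, C k = C' k := by
        intro k
        have hz : ∀ x, ∑ k, (C k - C' k) * α.act k (x * one (𝔾.inv k)) = 0 := by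
          intro x
          have e : ∀ k, (C k - C' k) * α.act k (x * one (𝔾.inv k)) =
              C k * α.act k (x * one (𝔾.inv k)) - C' k * α.act k (x * one (𝔾.inv k)) :=
            fun k => sub_mul _ _ _
          rw [Finset.sum_congr rfl fun k _ => e k, Finset.sum_sub_distrib, claim1, claim2,
            hfmem i x h, sub_self]
        exact sub_eq_zero.mp
          (hinj (fun k => C k - C' k) (fun k => sub_memD (hCmem k) (hC'mem k)) hz k)
      have hh := hCC' h
      rw [hCdef, hC'def] at hh
      simp only [if_true, 𝔾.inv_mul] at hh
      rw [mul_one_of_mem hone (hc1 i h)] at hh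
      rw [← hh]
      exact mul_one_of_mem hone (actMapsTo (mul_one_memD hone _ _))
    refine ⟨n, v, fun i => ∑ e ∈ Finset.univ.filter (fun e => 𝔾.isId e), cc i e, ?_⟩
    intro g
    have hγ : ∀ i, (∑ e ∈ Finset.univ.filter (fun e => 𝔾.isId e), cc i e) * one (𝔾.inv g) =
        cc i (𝔾.d g) * one (𝔾.inv g) := by
      intro i
      rw [Finset.sum_mul]
      refine Finset.sum_eq_single (𝔾.d g) ?_ ?_
      · intro e he hne
        simp only [Finset.mem_filter, Finset.mem_univ, true_and] at he
        refine horth' horth ?_ (hc1 i e) (one_mem hone (𝔾.inv g))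
        rw [r_of_isId 𝔾 he, 𝔾.r_inv]
        exact hne
      · intro habs
        exact absurd (Finset.mem_filter.mpr ⟨Finset.mem_univ _, isId_d 𝔾 g⟩) habs
    have e : ∀ i, v i * α.act g
        ((∑ e ∈ Finset.univ.filter (fun e => 𝔾.isId e), cc i e) * one (𝔾.inv g)) =
        v i * cc i g := by
      intro i
      rw [hγ i, ← hkey i g]
    rw [Finset.sum_congr rfl fun i _ => e i]
    have hba' := hba g
    rw [hbdef, hadef] at hba'
    exact hba'
end

section
/- Under the standing hypotheses, R is an α-partial Galois extension of R^α if and only if the map ρ : R⊗_{R^α}R → ∏_{g∈G} D_g given by ρ(x⊗y) = (x·α_g(y·1_{g⁻¹}))_{g∈G} is an isomorphism of left R-modules. -/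
universe u

namespace AlgGroupoid
variable {G : Type u} (𝔾 : AlgGroupoid G)

lemma isId_d (g : G) : 𝔾.isId (𝔾.d g) := 𝔾.d_d g
lemma isId_r (g : G) : 𝔾.isId (𝔾.r g) := 𝔾.d_r g

lemma r_eq_of_isId {e : G} (he : 𝔾.isId e) : 𝔾.r e = e := by
  calc 𝔾.r e = 𝔾.r (𝔾.d e) := by rw [he]
    _ = 𝔾.d e := 𝔾.r_d e
    _ = e := he

lemma inv_id {e : G} (he : 𝔾.isId e) : 𝔾.inv e = e := by
  have h1 : 𝔾.mul (𝔾.inv e) e = 𝔾.d e := 𝔾.inv_mul e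
  have h2 : 𝔾.mul (𝔾.inv e) e = 𝔾.inv e := by
    have hd : 𝔾.d (𝔾.inv e) = e := by rw [𝔾.d_inv, 𝔾.r_eq_of_isId he]
    have := 𝔾.mul_d (𝔾.inv e)
    rwa [hd] at this
  rw [← h2, h1, he]

lemma isId_inv {g : G} (hg : 𝔾.isId g) : 𝔾.isId (𝔾.inv g) := by
  rw [𝔾.inv_id hg]; exact hg

lemma isId_inv_iff (g : G) : 𝔾.isId (𝔾.inv g) ↔ 𝔾.isId g := by
  constructor
  · intro h
    have := 𝔾.isId_inv h
    rwa [𝔾.inv_inv] at this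
  · exact 𝔾.isId_inv

lemma eq_inv_of (m n : G) (hdn : 𝔾.d n = 𝔾.r m) (hnm : 𝔾.mul n m = 𝔾.d m) :
    n = 𝔾.inv m := by
  calc n = 𝔾.mul n (𝔾.d n) := (𝔾.mul_d n).symm
    _ = 𝔾.mul n (𝔾.mul m (𝔾.inv m)) := by rw [hdn, 𝔾.mul_inv]
    _ = 𝔾.mul (𝔾.mul n m) (𝔾.inv m) := (𝔾.mul_assoc' n m (𝔾.inv m) hdn (𝔾.r_inv m).symm).symm
    _ = 𝔾.mul (𝔾.r (𝔾.inv m)) (𝔾.inv m) := by rw [hnm, 𝔾.r_inv]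
    _ = 𝔾.inv m := 𝔾.r_mul _

lemma inv_mul_rev (h g : G) (hc : 𝔾.d h = 𝔾.r g) :
    𝔾.inv (𝔾.mul h g) = 𝔾.mul (𝔾.inv g) (𝔾.inv h) := by
  have hgih : 𝔾.d (𝔾.inv g) = 𝔾.r (𝔾.inv h) := by rw [𝔾.d_inv, 𝔾.r_inv, hc]
  refine (𝔾.eq_inv_of (𝔾.mul h g) _ ?_ ?_).symm
  · rw [𝔾.d_mul _ _ hgih, 𝔾.r_mul' h g hc, 𝔾.d_inv]
  · have hd1 : 𝔾.d (𝔾.mul (𝔾.inv g) (𝔾.inv h)) = 𝔾.r h := by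
      rw [𝔾.d_mul _ _ hgih, 𝔾.d_inv]
    have step1 : 𝔾.mul (𝔾.mul (𝔾.inv g) (𝔾.inv h)) (𝔾.mul h g)
        = 𝔾.mul (𝔾.mul (𝔾.mul (𝔾.inv g) (𝔾.inv h)) h) g := by
      rw [𝔾.mul_assoc' _ h g hd1 hc]
    have step2 : 𝔾.mul (𝔾.mul (𝔾.inv g) (𝔾.inv h)) h = 𝔾.inv g := by
      rw [𝔾.mul_assoc' (𝔾.inv g) (𝔾.inv h) h hgih (𝔾.d_inv h), 𝔾.inv_mul, hc,
        ← 𝔾.d_inv g, 𝔾.mul_d]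
    rw [step1, step2, 𝔾.inv_mul, 𝔾.d_mul h g hc]

lemma inv_mul_cancel_left (h g : G) (hc : 𝔾.d h = 𝔾.r g) :
    𝔾.mul (𝔾.inv h) (𝔾.mul h g) = g := by
  rw [← 𝔾.mul_assoc' (𝔾.inv h) h g (𝔾.d_inv h) hc, 𝔾.inv_mul, hc, 𝔾.r_mul]

lemma mul_inv_cancel_left (h g : G) (hrr : 𝔾.r h = 𝔾.r g) :
    𝔾.mul h (𝔾.mul (𝔾.inv h) g) = g := by
  have h1 : 𝔾.d (𝔾.inv h) = 𝔾.r g := by rw [𝔾.d_inv, hrr]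
  rw [← 𝔾.mul_assoc' h (𝔾.inv h) g (𝔾.r_inv h).symm h1, 𝔾.mul_inv, hrr, 𝔾.r_mul]

lemma not_isId_conj (h g : G) (hrr : 𝔾.r h = 𝔾.r g) (hne : g ≠ h) :
    ¬ 𝔾.isId (𝔾.mul (𝔾.inv h) g) := by
  intro hk
  set k := 𝔾.mul (𝔾.inv h) g with hkdef
  have hck : 𝔾.d (𝔾.inv h) = 𝔾.r g := by rw [𝔾.d_inv, hrr]
  have hrk : 𝔾.r k = 𝔾.d h := by rw [hkdef, 𝔾.r_mul' _ _ hck, 𝔾.r_inv]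
  have hkd : k = 𝔾.d h := by rw [← 𝔾.r_eq_of_isId hk, hrk]
  have : g = h := by
    have := 𝔾.mul_inv_cancel_left h g hrr
    rw [← hkdef, hkd, 𝔾.mul_d] at this
    exact this.symm
  exact hne this

end AlgGroupoid

namespace PartialGroupoidAction

variable {G : Type u} {𝔾 : AlgGroupoid G} {R : Type u} [Ring R]
  (α : PartialGroupoidAction 𝔾 R (Set.univ : Set R)) (one : G → R)

section Basic
variable (hone : ∀ g, IsIdentityElem (one g) (α.D g))
  (hcentral : ∀ g (x : R), one g * x = x * one g)

include hone in
lemma one_mem (g : G) : one g ∈ α.D g := (hone g).1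

include hone in
lemma mul_one_self {g : G} {x : R} (hx : x ∈ α.D g) : x * one g = x :=
  ((hone g).2 x hx).2

include hone in
lemma one_mul_self {g : G} {x : R} (hx : x ∈ α.D g) : one g * x = x :=
  ((hone g).2 x hx).1

include hone in
lemma mem_mul_right {g : G} (x : R) {y : R} (hy : y ∈ α.D g) : x * y ∈ α.D g := by
  have h1 : x * one g ∈ α.D (𝔾.r g) :=
    (α.ideal_r g).mul_mem_left (Set.mem_univ x) ((α.ideal g).subset (one_mem α one hone g))
  have h2 : (x * one g) * y ∈ α.D g := (α.ideal g).mul_mem_left h1 hy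
  rwa [mul_assoc, one_mul_self α one hone hy] at h2

include hone hcentral in
lemma mem_mul_left {g : G} (x : R) {y : R} (hy : y ∈ α.D g) : y * x ∈ α.D g := by
  have h1 : one g * x ∈ α.D (𝔾.r g) := by
    rw [hcentral]
    exact (α.ideal_r g).mul_mem_left (Set.mem_univ x) ((α.ideal g).subset (one_mem α one hone g))
  have h2 : y * (one g * x) ∈ α.D g := (α.ideal g).mul_mem_right hy h1
  rwa [← mul_assoc, mul_one_self α one hone hy] at h2

include hone in
lemma mul_one_mem (g : G) (x : R) : x * one g ∈ α.D g :=
  mem_mul_right α one hone x (one_mem α one hone g)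

lemma mem_D_r {g : G} {x : R} (hx : x ∈ α.D g) : x ∈ α.D (𝔾.r g) := (α.ideal g).subset hx

lemma act_mem {g : G} {x : R} (hx : x ∈ α.D (𝔾.inv g)) : α.act g x ∈ α.D g :=
  (α.bijOn g).mapsTo hx

lemma act_mem' {g : G} {x : R} (hx : x ∈ α.D g) : α.act (𝔾.inv g) x ∈ α.D (𝔾.inv g) := by
  refine (α.bijOn (𝔾.inv g)).mapsTo ?_
  rwa [𝔾.inv_inv]

lemma act_zero (g : G) : α.act g 0 = 0 := by
  have hz : (0 : R) ∈ α.D (𝔾.inv g) := (α.ideal (𝔾.inv g)).zero_mem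
  have h := α.map_add g 0 hz 0 hz
  rw [add_zero] at h
  exact left_eq_add.mp h

lemma sum_mem_D {g : G} {ι : Type*} {s : Finset ι} {f : ι → R}
    (hf : ∀ i ∈ s, f i ∈ α.D g) : (∑ i ∈ s, f i) ∈ α.D g := by
  classical
  induction s using Finset.induction_on with
  | empty => simpa using (α.ideal g).zero_mem
  | insert a s' hni ih =>
    rw [Finset.sum_insert hni]
    exact (α.ideal g).add_mem (hf a (Finset.mem_insert_self a s'))
      (ih fun i hi => hf i (Finset.mem_insert_of_mem hi))

lemma act_sum {g : G} {ι : Type*} {s : Finset ι} {f : ι → R}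
    (hf : ∀ i ∈ s, f i ∈ α.D (𝔾.inv g)) :
    α.act g (∑ i ∈ s, f i) = ∑ i ∈ s, α.act g (f i) := by
  classical
  induction s using Finset.induction_on with
  | empty => simpa using act_zero α g
  | insert a s' hni ih =>
    rw [Finset.sum_insert hni, Finset.sum_insert hni,
      α.map_add g _ (hf a (Finset.mem_insert_self a s')) _
        (sum_mem_D α (fun i hi => hf i (Finset.mem_insert_of_mem hi))),
      ih fun i hi => hf i (Finset.mem_insert_of_mem hi)]

lemma act_act_inv {g : G} {x : R} (hx : x ∈ α.D g) :
    α.act g (α.act (𝔾.inv g) x) = x := by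
  have hx' : x ∈ α.D (𝔾.inv (𝔾.inv g)) := by rwa [𝔾.inv_inv]
  have h1 : α.act (𝔾.inv g) x ∈ α.D (𝔾.inv g) := act_mem' α hx
  have hc := α.comp_cond g (𝔾.inv g) (𝔾.r_inv g).symm x hx' h1
  rw [𝔾.mul_inv] at hc
  rw [hc, α.act_id (𝔾.r g) (𝔾.isId_r g) x (mem_D_r α hx)]

lemma act_inv_act {g : G} {x : R} (hx : x ∈ α.D (𝔾.inv g)) :
    α.act (𝔾.inv g) (α.act g x) = x := by
  have h1 : α.act g x ∈ α.D (𝔾.inv (𝔾.inv g)) := by rw [𝔾.inv_inv]; exact act_mem α hx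
  have hc := α.comp_cond (𝔾.inv g) g (𝔾.d_inv g) x hx h1
  rw [𝔾.inv_mul] at hc
  have hx2 : x ∈ α.D (𝔾.d g) := by
    have := mem_D_r α hx
    rwa [𝔾.r_inv] at this
  rw [hc, α.act_id (𝔾.d g) (𝔾.isId_d g) x hx2]

include hone in
lemma act_one (g : G) : α.act g (one (𝔾.inv g)) = one g := by
  have hmem : one (𝔾.inv g) ∈ α.D (𝔾.inv g) := one_mem α one hone (𝔾.inv g)
  have humem : α.act g (one (𝔾.inv g)) ∈ α.D g := act_mem α hmem
  have hw : α.act (𝔾.inv g) (one g) ∈ α.D (𝔾.inv g) := act_mem' α (one_mem α one hone g)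
  have h1 : α.act g (one (𝔾.inv g)) * one g
      = α.act g (one (𝔾.inv g) * α.act (𝔾.inv g) (one g)) := by
    rw [α.map_mul g _ hmem _ hw, act_act_inv α (one_mem α one hone g)]
  rw [one_mul_self α one hone hw, act_act_inv α (one_mem α one hone g)] at h1
  exact (mul_one_self α one hone humem).symm.trans h1

end Basic

section Main
variable (hone : ∀ g, IsIdentityElem (one g) (α.D g))
  (hcentral : ∀ g (x : R), one g * x = x * one g)

-- Lemma B: reverse domain condition
lemma act_inv_mem (h g : G) (hc : 𝔾.d h = 𝔾.r g) {x : R}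
    (hx1 : x ∈ α.D h) (hx2 : x ∈ α.D (𝔾.mul h g)) :
    α.act (𝔾.inv h) x ∈ α.D g := by
  set g₁ := 𝔾.inv (𝔾.mul h g) with hg₁
  have hcomp : 𝔾.d g₁ = 𝔾.r h := by rw [hg₁, 𝔾.d_inv, 𝔾.r_mul' h g hc]
  have hx' : α.act (𝔾.inv h) x ∈ α.D (𝔾.inv h) := act_mem' α hx1
  have hact : α.act h (α.act (𝔾.inv h) x) = x := act_act_inv α hx1
  have hx2' : α.act h (α.act (𝔾.inv h) x) ∈ α.D (𝔾.inv g₁) := by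
    rw [hact, hg₁, 𝔾.inv_inv]; exact hx2
  have hdom := α.dom_cond g₁ h hcomp _ hx' hx2'
  have hmul : 𝔾.mul g₁ h = 𝔾.inv g := by
    rw [hg₁, 𝔾.inv_mul_rev h g hc]
    have hgih : 𝔾.d (𝔾.inv g) = 𝔾.r (𝔾.inv h) := by rw [𝔾.d_inv, 𝔾.r_inv, hc]
    rw [𝔾.mul_assoc' (𝔾.inv g) (𝔾.inv h) h hgih (𝔾.d_inv h), 𝔾.inv_mul, hc,
      ← 𝔾.d_inv g, 𝔾.mul_d]
  rwa [hmul, 𝔾.inv_inv] at hdom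

include hone hcentral in
-- Lemma C
lemma mul_act_one_one (h g : G) (hc : 𝔾.d h = 𝔾.r g) {x : R}
    (hx : x ∈ α.D (𝔾.mul h g)) :
    x * α.act h (one g * one (𝔾.inv h)) = x * one h := by
  have hs2 : one g * one (𝔾.inv h) ∈ α.D (𝔾.inv h) :=
    mem_mul_right α one hone _ (one_mem α one hone _)
  have hy1 : x * one h ∈ α.D h := mul_one_mem α one hone h x
  have hy2 : x * one h ∈ α.D (𝔾.mul h g) := mem_mul_left α one hone hcentral _ hx
  have hz1 : α.act (𝔾.inv h) (x * one h) ∈ α.D (𝔾.inv h) := act_mem' α hy1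
  have hz2 : α.act (𝔾.inv h) (x * one h) ∈ α.D g := act_inv_mem α h g hc hy1 hy2
  have hzs : α.act (𝔾.inv h) (x * one h) * (one g * one (𝔾.inv h))
      = α.act (𝔾.inv h) (x * one h) := by
    rw [← mul_assoc, mul_one_self α one hone hz2, mul_one_self α one hone hz1]
  have key : (x * one h) * α.act h (one g * one (𝔾.inv h)) = x * one h := by
    conv_lhs => rw [← act_act_inv α hy1]
    rw [← α.map_mul h _ hz1 _ hs2, hzs, act_act_inv α hy1]
  calc x * α.act h (one g * one (𝔾.inv h))
      = x * (one h * α.act h (one g * one (𝔾.inv h))) := by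
        rw [one_mul_self α one hone (act_mem α hs2)]
    _ = (x * one h) * α.act h (one g * one (𝔾.inv h)) := by rw [mul_assoc]
    _ = x * one h := key

include hone hcentral in
-- Lemma D
lemma act_trace_term (h g : G) (hc : 𝔾.d h = 𝔾.r g) (a : R) :
    α.act h (α.act g (a * one (𝔾.inv g)) * one (𝔾.inv h))
      = α.act (𝔾.mul h g) (a * one (𝔾.inv (𝔾.mul h g))) * one h := by
  set m := 𝔾.mul h g with hm
  have hsg : one g * one (𝔾.inv h) ∈ α.D g :=
    mem_mul_left α one hone hcentral _ (one_mem α one hone g)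
  have hsh : one g * one (𝔾.inv h) ∈ α.D (𝔾.inv h) :=
    mem_mul_right α one hone _ (one_mem α one hone _)
  have hq : α.act (𝔾.inv g) (one g * one (𝔾.inv h)) ∈ α.D (𝔾.inv g) := act_mem' α hsg
  have hqact : α.act g (α.act (𝔾.inv g) (one g * one (𝔾.inv h))) = one g * one (𝔾.inv h) :=
    act_act_inv α hsg
  have hqm : α.act (𝔾.inv g) (one g * one (𝔾.inv h)) ∈ α.D (𝔾.inv m) := by
    refine α.dom_cond h g hc _ hq ?_
    rw [hqact]; exact hsh
  set q := α.act (𝔾.inv g) (one g * one (𝔾.inv h)) with hqdef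
  have ht : a * one (𝔾.inv g) ∈ α.D (𝔾.inv g) := mul_one_mem α one hone _ a
  have ht' : a * one (𝔾.inv m) ∈ α.D (𝔾.inv m) := mul_one_mem α one hone _ a
  have htq : (a * one (𝔾.inv g)) * q = (a * one (𝔾.inv m)) * q := by
    rw [mul_assoc, one_mul_self α one hone hq, mul_assoc, one_mul_self α one hone hqm]
  have step1 : α.act g (a * one (𝔾.inv g)) * one (𝔾.inv h)
      = α.act g ((a * one (𝔾.inv m)) * q) := by
    have h1 : α.act g (a * one (𝔾.inv g)) * one g = α.act g (a * one (𝔾.inv g)) :=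
      mul_one_self α one hone (act_mem α ht)
    calc α.act g (a * one (𝔾.inv g)) * one (𝔾.inv h)
        = α.act g (a * one (𝔾.inv g)) * (one g * one (𝔾.inv h)) := by
          rw [← mul_assoc, h1]
      _ = α.act g (a * one (𝔾.inv g)) * α.act g q := by rw [hqact]
      _ = α.act g ((a * one (𝔾.inv g)) * q) := (α.map_mul g _ ht _ hq).symm
      _ = α.act g ((a * one (𝔾.inv m)) * q) := by rw [htq]
  have htqg : (a * one (𝔾.inv m)) * q ∈ α.D (𝔾.inv g) := mem_mul_right α one hone _ hq
  have htqm : (a * one (𝔾.inv m)) * q ∈ α.D (𝔾.inv m) := mem_mul_right α one hone _ hqm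
  have hactmem : α.act g ((a * one (𝔾.inv m)) * q) ∈ α.D (𝔾.inv h) := by
    rw [← step1]
    exact mul_one_mem α one hone _ _
  have step2 : α.act h (α.act g ((a * one (𝔾.inv m)) * q)) = α.act m ((a * one (𝔾.inv m)) * q) :=
    α.comp_cond h g hc _ htqg hactmem
  have step3 : α.act m ((a * one (𝔾.inv m)) * q) = α.act m (a * one (𝔾.inv m)) * α.act m q :=
    α.map_mul m _ ht' _ hqm
  have step4 : α.act m q = α.act h (one g * one (𝔾.inv h)) := by
    have := α.comp_cond h g hc q hq (by rw [hqact]; exact hsh)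
    rw [hqact] at this
    rw [← hm] at this
    exact this.symm
  have hmmem : α.act m (a * one (𝔾.inv m)) ∈ α.D m := act_mem α ht'
  rw [step1, step2, step3, step4]
  exact mul_act_one_one α one hone hcentral h g hc hmmem

variable [Fintype G] [DecidableEq G]
  (horth : ∀ e f, 𝔾.isId e → 𝔾.isId f → e ≠ f → ∀ x ∈ α.D e, ∀ y ∈ α.D f, x * y = 0)

include hone hcentral horth in
lemma trace_mem_invariants (a : R) :
    (∑ g : G, α.act g (a * one (𝔾.inv g))) ∈ invariants 𝔾 α one := by
  intro h
  set t : G → R := fun g => α.act g (a * one (𝔾.inv g)) with hts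
  have htm : ∀ g, t g ∈ α.D g := fun g => act_mem α (mul_one_mem α one hone _ a)
  have hLHS1 : (∑ g : G, t g) * one (𝔾.inv h) = ∑ g : G, t g * one (𝔾.inv h) :=
    Finset.sum_mul _ _ _
  have hLHS2 : α.act h (∑ g : G, t g * one (𝔾.inv h))
      = ∑ g : G, α.act h (t g * one (𝔾.inv h)) :=
    act_sum α fun g _ => mul_one_mem α one hone _ _
  have hL3 : ∑ g : G, α.act h (t g * one (𝔾.inv h))
      = ∑ g ∈ Finset.univ.filter (fun g => 𝔾.d h = 𝔾.r g), α.act h (t g * one (𝔾.inv h)) := by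
    refine (Finset.sum_subset (Finset.filter_subset _ _) ?_).symm
    intro g _ hg
    rw [Finset.mem_filter] at hg
    push_neg at hg
    have hz : t g * one (𝔾.inv h) = 0 := by
      refine horth (𝔾.r g) (𝔾.d h) (𝔾.isId_r g) (𝔾.isId_d h)
        (fun hEq => (hg (Finset.mem_univ g)) hEq.symm) _ (mem_D_r α (htm g)) _ ?_
      have h1 : one (𝔾.inv h) ∈ α.D (𝔾.r (𝔾.inv h)) := mem_D_r α (one_mem α one hone _)
      rwa [𝔾.r_inv] at h1
    rw [hz, act_zero]
  have hR3 : ∑ g : G, t g * one h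
      = ∑ g ∈ Finset.univ.filter (fun g => 𝔾.r h = 𝔾.r g), t g * one h := by
    refine (Finset.sum_subset (Finset.filter_subset _ _) ?_).symm
    intro g _ hg
    rw [Finset.mem_filter] at hg
    push_neg at hg
    exact horth (𝔾.r g) (𝔾.r h) (𝔾.isId_r g) (𝔾.isId_r h)
      (fun hEq => (hg (Finset.mem_univ g)) hEq.symm) _ (mem_D_r α (htm g)) _
      (mem_D_r α (one_mem α one hone h))
  have hbij : ∑ g ∈ Finset.univ.filter (fun g => 𝔾.d h = 𝔾.r g), α.act h (t g * one (𝔾.inv h))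
      = ∑ g ∈ Finset.univ.filter (fun g => 𝔾.r h = 𝔾.r g), t g * one h := by
    refine Finset.sum_nbij' (fun g => 𝔾.mul h g) (fun g' => 𝔾.mul (𝔾.inv h) g') ?_ ?_ ?_ ?_ ?_
    · intro g hg
      rw [Finset.mem_filter] at hg ⊢
      exact ⟨Finset.mem_univ _, (𝔾.r_mul' h g hg.2).symm⟩
    · intro g' hg'
      rw [Finset.mem_filter] at hg' ⊢
      refine ⟨Finset.mem_univ _, ?_⟩
      rw [𝔾.r_mul' (𝔾.inv h) g' (by rw [𝔾.d_inv, hg'.2]), 𝔾.r_inv]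
    · intro g hg
      rw [Finset.mem_filter] at hg
      exact 𝔾.inv_mul_cancel_left h g hg.2
    · intro g' hg'
      rw [Finset.mem_filter] at hg'
      exact 𝔾.mul_inv_cancel_left h g' hg'.2
    · intro g hg
      rw [Finset.mem_filter] at hg
      exact act_trace_term α one hone hcentral h g hg.2 a
  show α.act h ((∑ g : G, t g) * one (𝔾.inv h)) = (∑ g : G, t g) * one h
  rw [hLHS1, hLHS2, hL3, hbij, ← hR3, Finset.sum_mul]

section Galois
variable {n : ℕ} {X Y : Fin n → R}

include hone hcentral in
lemma dual_relation
    (hGal : ∀ g : G, ∑ i, X i * α.act g (Y i * one (𝔾.inv g)) = if 𝔾.isId g then one g else 0)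
    (g : G) :
    ∑ i, α.act g (X i * one (𝔾.inv g)) * (Y i * one g) = if 𝔾.isId g then one g else 0 := by
  have DR : ∀ g : G, ∑ i, α.act (𝔾.inv g) (X i * one g) * (Y i * one (𝔾.inv g))
      = if 𝔾.isId g then one g else 0 := by
    intro g
    have hterm : ∀ i : Fin n,
        (X i * one g) * α.act g (Y i * one (𝔾.inv g)) ∈ α.D (𝔾.inv (𝔾.inv g)) := by
      intro i
      rw [𝔾.inv_inv]
      exact mem_mul_left α one hone hcentral _ (mul_one_mem α one hone g (X i))
    have hM : ∑ i, (X i * one g) * α.act g (Y i * one (𝔾.inv g))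
        = if 𝔾.isId g then one g else 0 := by
      have h1 : ∀ i : Fin n, (X i * one g) * α.act g (Y i * one (𝔾.inv g))
          = one g * (X i * α.act g (Y i * one (𝔾.inv g))) := by
        intro i
        rw [← mul_assoc, hcentral g (X i)]
      rw [Finset.sum_congr rfl fun i _ => h1 i, ← Finset.mul_sum, hGal g]
      by_cases hg : 𝔾.isId g
      · simp only [if_pos hg]
        exact one_mul_self α one hone (one_mem α one hone g)
      · simp only [if_neg hg]
        exact mul_zero _
    have h2 : α.act (𝔾.inv g) (∑ i, (X i * one g) * α.act g (Y i * one (𝔾.inv g)))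
        = ∑ i, α.act (𝔾.inv g) ((X i * one g) * α.act g (Y i * one (𝔾.inv g))) :=
      act_sum α (s := (Finset.univ : Finset (Fin n)))
        (f := fun i => (X i * one g) * α.act g (Y i * one (𝔾.inv g))) (fun i _ => hterm i)
    have h3 : ∀ i : Fin n, α.act (𝔾.inv g) ((X i * one g) * α.act g (Y i * one (𝔾.inv g)))
        = α.act (𝔾.inv g) (X i * one g) * (Y i * one (𝔾.inv g)) := by
      intro i
      have ha : X i * one g ∈ α.D (𝔾.inv (𝔾.inv g)) := by
        rw [𝔾.inv_inv]; exact mul_one_mem α one hone g (X i)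
      have hb : α.act g (Y i * one (𝔾.inv g)) ∈ α.D (𝔾.inv (𝔾.inv g)) := by
        rw [𝔾.inv_inv]; exact act_mem α (mul_one_mem α one hone _ _)
      rw [α.map_mul (𝔾.inv g) _ ha _ hb, act_inv_act α (mul_one_mem α one hone _ _)]
    rw [← Finset.sum_congr rfl fun i _ => h3 i, ← h2, hM]
    by_cases hg : 𝔾.isId g
    · simp only [if_pos hg]
      rw [𝔾.inv_id hg]
      exact α.act_id g hg _ (one_mem α one hone g)
    · simp only [if_neg hg]
      exact act_zero α _
  have := DR (𝔾.inv g)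
  rw [𝔾.inv_inv] at this
  rw [this]
  by_cases hg : 𝔾.isId g
  · rw [if_pos ((𝔾.isId_inv_iff g).mpr hg), if_pos hg, 𝔾.inv_id hg]
  · rw [if_neg (fun hh => hg ((𝔾.isId_inv_iff g).mp hh)), if_neg hg]

include hone hcentral horth in
lemma galois_delta
    (hGal : ∀ g : G, ∑ i, X i * α.act g (Y i * one (𝔾.inv g)) = if 𝔾.isId g then one g else 0)
    (g h : G) :
    ∑ i, α.act h (X i * one (𝔾.inv h)) * α.act g (Y i * one (𝔾.inv g))
      = if g = h then one g else 0 := by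
  by_cases hr : 𝔾.r g = 𝔾.r h
  case neg =>
    rw [if_neg (fun hgh => hr (by rw [hgh]))]
    refine Finset.sum_eq_zero fun i _ => ?_
    exact horth (𝔾.r h) (𝔾.r g) (𝔾.isId_r h) (𝔾.isId_r g) (fun e => hr e.symm)
      _ (mem_D_r α (act_mem α (mul_one_mem α one hone _ _)))
      _ (mem_D_r α (act_mem α (mul_one_mem α one hone _ _)))
  case pos =>
    set k := 𝔾.mul (𝔾.inv h) g with hkdef
    have hck : 𝔾.d (𝔾.inv h) = 𝔾.r g := by rw [𝔾.d_inv]; exact hr.symm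
    have hhg_g : one h * one g ∈ α.D g := mem_mul_right α one hone _ (one_mem α one hone g)
    have hhg_h : one h * one g ∈ α.D h :=
      mem_mul_left α one hone hcentral _ (one_mem α one hone h)
    set u := α.act (𝔾.inv g) (one h * one g) with hudef
    have hu : u ∈ α.D (𝔾.inv g) := act_mem' α hhg_g
    have huact : α.act g u = one h * one g := act_act_inv α hhg_g
    have huk : u ∈ α.D (𝔾.inv k) := by
      refine α.dom_cond (𝔾.inv h) g hck u hu ?_
      rw [huact, 𝔾.inv_inv]; exact hhg_h
    have hone_comm : ∀ z : R, (one h * one g) * z = z * (one h * one g) := by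
      intro z
      calc (one h * one g) * z = one h * (one g * z) := mul_assoc _ _ _
        _ = one h * (z * one g) := by rw [hcentral g z]
        _ = (one h * z) * one g := (mul_assoc _ _ _).symm
        _ = (z * one h) * one g := by rw [hcentral h z]
        _ = z * (one h * one g) := mul_assoc _ _ _
    set w := one (𝔾.inv h) * α.act k u with hwdef
    have hw_mem : w ∈ α.D (𝔾.inv h) := by
      rw [hwdef, hcentral (𝔾.inv h) (α.act k u)]
      exact mul_one_mem α one hone _ _
    have key : ∀ i : Fin n,
        α.act h (X i * one (𝔾.inv h)) * α.act g (Y i * one (𝔾.inv g))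
          = α.act h ((X i * α.act k (Y i * one (𝔾.inv k))) * w) := by
      intro i
      set A := X i * one (𝔾.inv h) with hAdef
      set B := Y i * one (𝔾.inv g) with hBdef
      have hA : A ∈ α.D (𝔾.inv h) := mul_one_mem α one hone _ _
      have hB : B ∈ α.D (𝔾.inv g) := mul_one_mem α one hone _ _
      have hgB : α.act g B ∈ α.D g := act_mem α hB
      have hc_mem : u * B ∈ α.D (𝔾.inv g) := mem_mul_right α one hone u hB
      have hact_c : α.act g (u * B) = (one h * one g) * α.act g B := by
        rw [α.map_mul g u hu B hB, huact]
      have h1hg : (one h * one g) * α.act g B = one h * α.act g B := by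
        rw [mul_assoc, one_mul_self α one hone hgB]
      have hgc_h : α.act g (u * B) ∈ α.D h := by
        rw [hact_c, h1hg, hcentral h (α.act g B)]
        exact mul_one_mem α one hone _ _
      have hgc_h' : α.act g (u * B) ∈ α.D (𝔾.inv (𝔾.inv h)) := by rw [𝔾.inv_inv]; exact hgc_h
      have hck_dom : u * B ∈ α.D (𝔾.inv k) := α.dom_cond (𝔾.inv h) g hck _ hc_mem hgc_h'
      have hcomp : α.act (𝔾.inv h) (α.act g (u * B)) = α.act k (u * B) :=
        α.comp_cond (𝔾.inv h) g hck _ hc_mem hgc_h'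
      have hkc_invh : α.act k (u * B) ∈ α.D (𝔾.inv h) := by
        rw [← hcomp]; exact act_mem' α hgc_h
      have eq1 : α.act h A * α.act g B = α.act h A * α.act g (u * B) := by
        calc α.act h A * α.act g B
            = (α.act h A * one h) * α.act g B := by
              rw [mul_one_self α one hone (act_mem α hA)]
          _ = α.act h A * (one h * α.act g B) := mul_assoc _ _ _
          _ = α.act h A * α.act g (u * B) := by rw [hact_c, h1hg]
      have eq2 : α.act g (u * B) = α.act h (α.act k (u * B)) := by
        rw [← hcomp, act_act_inv α hgc_h]
      have eq3 : α.act h A * α.act h (α.act k (u * B)) = α.act h (A * α.act k (u * B)) :=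
        (α.map_mul h A hA _ hkc_invh).symm
      have hBu_mem : B * u ∈ α.D (𝔾.inv g) := mem_mul_right α one hone B hu
      have hcomm : u * B = B * u := by
        have e2 : α.act g (B * u) = α.act g B * (one h * one g) := by
          rw [α.map_mul g B hB u hu, huact]
        have e3 : α.act g (u * B) = α.act g (B * u) := by
          rw [hact_c, e2, hone_comm]
        exact (α.bijOn g).injOn hc_mem hBu_mem e3
      have eq4 : u * B = (Y i * one (𝔾.inv k)) * u := by
        rw [hcomm, hBdef, mul_assoc, one_mul_self α one hone hu,
          ← one_mul_self α one hone huk, ← mul_assoc]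
        rw [one_mul_self α one hone huk]
      have eq5 : α.act k (u * B) = α.act k (Y i * one (𝔾.inv k)) * α.act k u := by
        rw [eq4, α.map_mul k _ (mul_one_mem α one hone _ _) u huk]
      have eq6 : A * (α.act k (Y i * one (𝔾.inv k)) * α.act k u)
          = (X i * α.act k (Y i * one (𝔾.inv k))) * w := by
        rw [hwdef, hAdef]
        calc (X i * one (𝔾.inv h)) * (α.act k (Y i * one (𝔾.inv k)) * α.act k u)
            = X i * (one (𝔾.inv h) * (α.act k (Y i * one (𝔾.inv k)) * α.act k u)) :=
              mul_assoc _ _ _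
          _ = X i * ((one (𝔾.inv h) * α.act k (Y i * one (𝔾.inv k))) * α.act k u) := by
              rw [mul_assoc]
          _ = X i * ((α.act k (Y i * one (𝔾.inv k)) * one (𝔾.inv h)) * α.act k u) := by
              rw [hcentral (𝔾.inv h) (α.act k (Y i * one (𝔾.inv k)))]
          _ = X i * (α.act k (Y i * one (𝔾.inv k)) * (one (𝔾.inv h) * α.act k u)) := by
              rw [mul_assoc]
          _ = (X i * α.act k (Y i * one (𝔾.inv k))) * (one (𝔾.inv h) * α.act k u) := by
              rw [mul_assoc]
      rw [eq1, eq2, eq3, eq5, eq6]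
    rw [Finset.sum_congr rfl fun i _ => key i]
    have hmem : ∀ i : Fin n, (X i * α.act k (Y i * one (𝔾.inv k))) * w ∈ α.D (𝔾.inv h) :=
      fun i => mem_mul_right α one hone _ hw_mem
    rw [← act_sum α (s := (Finset.univ : Finset (Fin n)))
      (f := fun i => (X i * α.act k (Y i * one (𝔾.inv k))) * w) (fun i _ => hmem i),
      ← Finset.sum_mul, hGal k]
    by_cases hgh : g = h
    case pos =>
      subst hgh
      have hkid : k = 𝔾.d g := by rw [hkdef, 𝔾.inv_mul]
      have hid : 𝔾.isId k := by rw [hkid]; exact 𝔾.isId_d g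
      have hu_eq : u = one (𝔾.inv g) := by
        rw [hudef, mul_one_self α one hone (one_mem α one hone g)]
        have := act_one α one hone (𝔾.inv g)
        rwa [𝔾.inv_inv] at this
      have huDk : u ∈ α.D k := by
        rw [hkid, hu_eq]
        have h1 := mem_D_r α (one_mem α one hone (𝔾.inv g))
        rwa [𝔾.r_inv] at h1
      have hactku : α.act k u = u := by
        rw [hkid]
        exact α.act_id (𝔾.d g) (𝔾.isId_d g) u (by rw [← hkid]; exact huDk)
      have hw_eq : w = one (𝔾.inv g) := by
        rw [hwdef, hactku, hu_eq, one_mul_self α one hone (one_mem α one hone _)]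
      rw [if_pos hid, if_pos rfl, hw_eq]
      have honek : one k * one (𝔾.inv g) = one (𝔾.inv g) := by
        rw [hkid]
        refine one_mul_self α one hone ?_
        have h1 := mem_D_r α (one_mem α one hone (𝔾.inv g))
        rwa [𝔾.r_inv] at h1
      rw [honek, act_one α one hone g]
    case neg =>
      rw [if_neg (𝔾.not_isId_conj h g hr.symm hgh), if_neg hgh, zero_mul, act_zero]

end Galois
end Main
end PartialGroupoidAction

open PartialGroupoidAction

/-- **Theorem 5.3 (i) ⇔ (iv)**: under the standing hypotheses, `R` is an
`α`-partial Galois extension of `R^α` if and only if the map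
`ρ : R ⊗_{R^α} R → ∏_{g ∈ G} D_g`, `x ⊗ y ↦ (x α_g(y 1_{g⁻¹}))_g`, is an
isomorphism of left `R`-modules.  Bijectivity of `ρ` is expressed by:
surjectivity onto `∏_g D_g`, and injectivity via the standard equational
criterion for vanishing of tensors over `R^α`. -/
theorem partial_galois_iff_rho_iso {G : Type u} [Nonempty G] [Fintype G]
    [DecidableEq G] (𝔾 : AlgGroupoid G) {R : Type u} [Ring R]
    (α : PartialGroupoidAction 𝔾 R (Set.univ : Set R))
    (one : G → R) (hone : ∀ g, IsIdentityElem (one g) (α.D g))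
    (hcentral : ∀ g (x : R), one g * x = x * one g)
    (horth : ∀ e f, 𝔾.isId e → 𝔾.isId f → e ≠ f → ∀ x ∈ α.D e, ∀ y ∈ α.D f, x * y = 0)
    (hunit : (1 : R) = ∑ e ∈ Finset.univ.filter (fun e => 𝔾.isId e), one e) :
    IsPartialGalois 𝔾 α one ↔
      ((∀ f : G → R, (∀ g, f g ∈ α.D g) →
          ∃ (k : ℕ) (xs ys : Fin k → R), ∀ g : G,
            f g = ∑ i, xs i * α.act g (ys i * one (𝔾.inv g))) ∧
       (∀ (k : ℕ) (xs ys : Fin k → R),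
          (∀ g : G, ∑ i, xs i * α.act g (ys i * one (𝔾.inv g)) = 0) →
          ∃ (p : ℕ) (aij : Fin k → Fin p → R) (zs : Fin p → R),
            (∀ i j, aij i j ∈ invariants 𝔾 α one) ∧
            (∀ j, ∑ i, xs i * aij i j = 0) ∧
            (∀ i, ys i = ∑ j, aij i j * zs j))) := by
  constructor
  · rintro ⟨n, X, Y, hGal⟩
    constructor
    · -- surjectivity
      intro f hf
      set e := (Fintype.equivFin (G × Fin n)).symm with hedef
      refine ⟨Fintype.card (G × Fin n),
        fun j => f (e j).1 * α.act (e j).1 (X (e j).2 * one (𝔾.inv (e j).1)),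
        fun j => Y (e j).2, fun g => ?_⟩
      have h1 : ∑ j, f (e j).1 * α.act (e j).1 (X (e j).2 * one (𝔾.inv (e j).1))
            * α.act g (Y (e j).2 * one (𝔾.inv g))
          = ∑ p : G × Fin n, f p.1 * α.act p.1 (X p.2 * one (𝔾.inv p.1))
            * α.act g (Y p.2 * one (𝔾.inv g)) :=
        Equiv.sum_comp e (fun p => f p.1 * α.act p.1 (X p.2 * one (𝔾.inv p.1))
            * α.act g (Y p.2 * one (𝔾.inv g)))
      rw [h1, Fintype.sum_prod_type]
      have h2 : ∀ h : G, ∑ i : Fin n, f h * α.act h (X i * one (𝔾.inv h))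
            * α.act g (Y i * one (𝔾.inv g))
          = f h * (if g = h then one g else 0) := by
        intro h
        rw [← galois_delta α one hone hcentral horth hGal g h, Finset.mul_sum]
        exact Finset.sum_congr rfl fun i _ => mul_assoc _ _ _
      rw [Finset.sum_congr rfl fun h _ => h2 h]
      have h3 : ∀ h : G, f h * (if g = h then one g else 0)
          = if g = h then f g * one g else 0 := by
        intro h
        by_cases hgh : g = h
        · subst hgh; rw [if_pos rfl, if_pos rfl]
        · rw [if_neg hgh, if_neg hgh, mul_zero]
      rw [Finset.sum_congr rfl fun h _ => h3 h, Finset.sum_ite_eq,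
        if_pos (Finset.mem_univ g), mul_one_self α one hone (hf g)]
    · -- injectivity
      intro kk xs ys hzero
      refine ⟨n, fun i t => ∑ g : G, α.act g (ys i * X t * one (𝔾.inv g)), Y,
        fun i t => trace_mem_invariants α one hone hcentral horth (ys i * X t),
        fun t => ?_, fun i => ?_⟩
      · -- ∑ i xs i * aij i t = 0
        have hsplit : ∀ (g : G) (i : Fin kk), α.act g (ys i * X t * one (𝔾.inv g))
            = α.act g (ys i * one (𝔾.inv g)) * α.act g (X t * one (𝔾.inv g)) := by
          intro g i
          rw [← α.map_mul g _ (mul_one_mem α one hone _ _) _ (mul_one_mem α one hone _ _)]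
          congr 1
          symm
          calc (ys i * one (𝔾.inv g)) * (X t * one (𝔾.inv g))
              = ys i * (one (𝔾.inv g) * (X t * one (𝔾.inv g))) := mul_assoc _ _ _
            _ = ys i * ((X t * one (𝔾.inv g)) * one (𝔾.inv g)) := by
                rw [hcentral (𝔾.inv g) (X t * one (𝔾.inv g))]
            _ = ys i * (X t * (one (𝔾.inv g) * one (𝔾.inv g))) := by rw [mul_assoc]
            _ = ys i * (X t * one (𝔾.inv g)) := by
                rw [one_mul_self α one hone (one_mem α one hone _)]
            _ = ys i * X t * one (𝔾.inv g) := (mul_assoc _ _ _).symm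
        calc ∑ i, xs i * ∑ g : G, α.act g (ys i * X t * one (𝔾.inv g))
            = ∑ i, ∑ g : G, xs i * α.act g (ys i * X t * one (𝔾.inv g)) := by
              exact Finset.sum_congr rfl fun i _ => Finset.mul_sum _ _ _
          _ = ∑ g : G, ∑ i, xs i * α.act g (ys i * X t * one (𝔾.inv g)) := Finset.sum_comm
          _ = ∑ g : G, (∑ i, xs i * α.act g (ys i * one (𝔾.inv g)))
                * α.act g (X t * one (𝔾.inv g)) := by
              refine Finset.sum_congr rfl fun g _ => ?_
              rw [Finset.sum_mul]
              refine Finset.sum_congr rfl fun i _ => ?_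
              rw [hsplit g i, mul_assoc]
          _ = 0 := by
              refine Finset.sum_eq_zero fun g _ => ?_
              rw [hzero g, zero_mul]
      · -- ys i = ∑ t aij i t * Y t
        have hsplit : ∀ (g : G) (t : Fin n), α.act g (ys i * X t * one (𝔾.inv g))
            = α.act g (ys i * one (𝔾.inv g)) * α.act g (X t * one (𝔾.inv g)) := by
          intro g t
          rw [← α.map_mul g _ (mul_one_mem α one hone _ _) _ (mul_one_mem α one hone _ _)]
          congr 1
          symm
          calc (ys i * one (𝔾.inv g)) * (X t * one (𝔾.inv g))
              = ys i * (one (𝔾.inv g) * (X t * one (𝔾.inv g))) := mul_assoc _ _ _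
            _ = ys i * ((X t * one (𝔾.inv g)) * one (𝔾.inv g)) := by
                rw [hcentral (𝔾.inv g) (X t * one (𝔾.inv g))]
            _ = ys i * (X t * (one (𝔾.inv g) * one (𝔾.inv g))) := by rw [mul_assoc]
            _ = ys i * (X t * one (𝔾.inv g)) := by
                rw [one_mul_self α one hone (one_mem α one hone _)]
            _ = ys i * X t * one (𝔾.inv g) := (mul_assoc _ _ _).symm
        have key : ∀ g : G, ∑ t, α.act g (ys i * X t * one (𝔾.inv g)) * Y t
            = if 𝔾.isId g then ys i * one g else 0 := by
          intro g
          set A := α.act g (ys i * one (𝔾.inv g)) with hAdef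
          have hA : A ∈ α.D g := act_mem α (mul_one_mem α one hone _ _)
          have step1 : ∑ t, α.act g (ys i * X t * one (𝔾.inv g)) * Y t
              = A * ∑ t, α.act g (X t * one (𝔾.inv g)) * Y t := by
            rw [Finset.mul_sum]
            refine Finset.sum_congr rfl fun t _ => ?_
            rw [hsplit g t, mul_assoc]
          have step2 : A * ∑ t, α.act g (X t * one (𝔾.inv g)) * Y t
              = A * ((∑ t, α.act g (X t * one (𝔾.inv g)) * Y t) * one g) := by
            conv_lhs => rw [← mul_one_self α one hone hA]
            rw [mul_assoc, hcentral g (∑ t, α.act g (X t * one (𝔾.inv g)) * Y t)]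
          have step3 : (∑ t, α.act g (X t * one (𝔾.inv g)) * Y t) * one g
              = if 𝔾.isId g then one g else 0 := by
            rw [Finset.sum_mul, ← dual_relation α one hone hcentral hGal g]
            exact Finset.sum_congr rfl fun t _ => mul_assoc _ _ _
          rw [step1, step2, step3]
          by_cases hg : 𝔾.isId g
          · simp only [if_pos hg]
            rw [hAdef, 𝔾.inv_id hg,
              α.act_id g hg _ (mul_one_mem α one hone g (ys i)), mul_assoc,
              one_mul_self α one hone (one_mem α one hone g)]
          · simp only [if_neg hg]
            exact mul_zero _
        calc ys i = ys i * 1 := (mul_one _).symm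
          _ = ys i * ∑ e ∈ Finset.univ.filter (fun e => 𝔾.isId e), one e := by rw [← hunit]
          _ = ∑ e ∈ Finset.univ.filter (fun e => 𝔾.isId e), ys i * one e :=
              Finset.mul_sum _ _ _
          _ = ∑ g : G, if 𝔾.isId g then ys i * one g else 0 := Finset.sum_filter _ _
          _ = ∑ g : G, ∑ t, α.act g (ys i * X t * one (𝔾.inv g)) * Y t :=
              Finset.sum_congr rfl fun g _ => (key g).symm
          _ = ∑ t, ∑ g : G, α.act g (ys i * X t * one (𝔾.inv g)) * Y t := Finset.sum_comm
          _ = ∑ t, (∑ g : G, α.act g (ys i * X t * one (𝔾.inv g))) * Y t := by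
              refine Finset.sum_congr rfl fun t _ => ?_
              rw [Finset.sum_mul]
  · rintro ⟨hsurj, -⟩
    obtain ⟨k, xs, ys, h⟩ := hsurj (fun g => if 𝔾.isId g then one g else 0) (by
      intro g
      by_cases hg : 𝔾.isId g
      · simpa [hg] using one_mem α one hone g
      · simpa [hg] using (α.ideal g).zero_mem)
    exact ⟨k, xs, ys, fun g => (h g).symm⟩
end

section
/- Under the standing hypotheses, the following are equivalent: (a) R is an α-partial Galois extension of R^α; (b) R·t·R = R⋆_αG, where t = Σ_{g∈G} 1_gδ_g; (c) the map τ' : R⊗_{R^α}R → R⋆_αG, τ'(x⊗y) = Σ_{g∈G} x·α_g(y·1_{g⁻¹})δ_g, is surjective. -/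
universe u

/-- A realization of the (partial) skew groupoid ring `R ⋆_α G` on the ring
`A`: the maps `δ g : D_g → A`, `x ↦ x·δ_g`, are additive, their images are
independent and span `A` (so `A = ⊕_{g ∈ G} D_g δ_g` as an additive group),
and multiplication is given by
`(x δ_g)(y δ_h) = α_g(α_{g⁻¹}(x) y) δ_{gh}` if `(g,h) ∈ G²` and `0` otherwise. -/
structure SkewRingRep {G : Type u} (𝔾 : AlgGroupoid G) {T : Type u} [NonUnitalRing T]
    {R : Set T} (α : PartialGroupoidAction 𝔾 T R) (A : Type u) [NonUnitalRing A] where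
  δ : G → T → A
  map_add : ∀ g, ∀ x ∈ α.D g, ∀ y ∈ α.D g, δ g (x + y) = δ g x + δ g y
  mul_of : ∀ g h, 𝔾.d g = 𝔾.r h → ∀ x ∈ α.D g, ∀ y ∈ α.D h,
    δ g x * δ h y = δ (𝔾.mul g h) (α.act g (α.act (𝔾.inv g) x * y))
  mul_of_ne : ∀ g h, 𝔾.d g ≠ 𝔾.r h → ∀ x ∈ α.D g, ∀ y ∈ α.D h, δ g x * δ h y = 0
  indep : ∀ (s : Finset G) (c : G → T), (∀ g, c g ∈ α.D g) →
    (∑ g ∈ s, δ g (c g)) = 0 → ∀ g ∈ s, c g = 0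
  spans : ∀ a : A, ∃ (s : Finset G) (c : G → T), (∀ g, c g ∈ α.D g) ∧ a = ∑ g ∈ s, δ g (c g)

section Aux

variable {G : Type u} {𝔾 : AlgGroupoid G} {R : Type u} [Ring R]
  {α : PartialGroupoidAction 𝔾 R (Set.univ : Set R)} {one : G → R}

lemma PG.isId_r (g : G) : 𝔾.isId (𝔾.r g) := 𝔾.d_r g

lemma PG.isId_d (g : G) : 𝔾.isId (𝔾.d g) := 𝔾.d_d g

lemma PG.r_of_isId {e : G} (he : 𝔾.isId e) : 𝔾.r e = e := by
  have h : 𝔾.r (𝔾.d e) = 𝔾.d e := 𝔾.r_d e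
  rwa [he] at h

lemma PG.inv_of_isId {e : G} (he : 𝔾.isId e) : 𝔾.inv e = e := by
  have h1 : 𝔾.mul (𝔾.inv e) e = 𝔾.d e := 𝔾.inv_mul e
  have h2 : 𝔾.mul (𝔾.inv e) (𝔾.d (𝔾.inv e)) = 𝔾.inv e := 𝔾.mul_d (𝔾.inv e)
  rw [𝔾.d_inv, PG.r_of_isId he] at h2
  rw [h2] at h1
  rw [h1]
  exact he

lemma PG.mem_r {g : G} {x : R} (hx : x ∈ α.D g) : x ∈ α.D (𝔾.r g) := (α.ideal g).subset hx

lemma PG.zero_mem (g : G) : (0 : R) ∈ α.D g := (α.ideal g).zero_mem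

section WithOne
variable (hone : ∀ g, IsIdentityElem (one g) (α.D g))
variable (hcentral : ∀ g (x : R), one g * x = x * one g)
include hone hcentral

lemma PG.one_mem (g : G) : one g ∈ α.D g := (hone g).1

lemma PG.mul_one_mem (g : G) (x : R) : x * one g ∈ α.D g := by
  have h1 : x * one (𝔾.r g) ∈ α.D (𝔾.r g) :=
    (α.ideal_r g).mul_mem_left (Set.mem_univ x) (PG.one_mem hone hcentral (𝔾.r g))
  have h2 : x * one g = x * one (𝔾.r g) * one g := by
    rw [mul_assoc, ((hone (𝔾.r g)).2 (one g) (PG.mem_r (PG.one_mem hone hcentral g))).1]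
  rw [h2]
  exact (α.ideal g).mul_mem_left h1 (PG.one_mem hone hcentral g)

lemma PG.mem_mul {g : G} {a : R} (ha : a ∈ α.D g) (y : R) : a * y ∈ α.D g := by
  have h2 : a * y = a * (y * one g) := by
    conv_lhs => rw [← ((hone g).2 a ha).2]
    rw [mul_assoc, hcentral]
  rw [h2]
  exact (α.ideal g).mul_mem_left (PG.mem_r ha) (PG.mul_one_mem hone hcentral g y)

lemma PG.mul_mem' {g : G} {a : R} (ha : a ∈ α.D g) (y : R) : y * a ∈ α.D g := by
  have h2 : y * a = y * one g * a := by
    conv_lhs => rw [← ((hone g).2 a ha).1]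
    rw [← mul_assoc]
  rw [h2]
  exact (α.ideal g).mul_mem_right (PG.mul_one_mem hone hcentral g y) (PG.mem_r ha)

end WithOne

lemma PG.sum_mem_D {g : G} {ι : Type*} {s : Finset ι} {f : ι → R}
    (hf : ∀ i ∈ s, f i ∈ α.D g) : (∑ i ∈ s, f i) ∈ α.D g := by
  induction s using Finset.cons_induction with
  | empty => simpa using PG.zero_mem (α := α) g
  | cons a s ha ih =>
    rw [Finset.sum_cons]
    exact (α.ideal g).add_mem (hf a (Finset.mem_cons_self a s))
      (ih fun i hi => hf i (Finset.mem_cons_of_mem hi))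

lemma PG.act_mem {g : G} {x : R} (hx : x ∈ α.D (𝔾.inv g)) : α.act g x ∈ α.D g :=
  (α.bijOn g).mapsTo hx

lemma PG.act_zero (g : G) : α.act g 0 = 0 := by
  have h := α.map_add g 0 (PG.zero_mem _) 0 (PG.zero_mem _)
  rw [add_zero] at h
  exact left_eq_add.mp h

lemma PG.act_act_inv {g : G} {a : R} (ha : a ∈ α.D g) :
    α.act g (α.act (𝔾.inv g) a) = a := by
  have h1 : a ∈ α.D (𝔾.inv (𝔾.inv g)) := by rw [𝔾.inv_inv]; exact ha
  have h2 : α.act (𝔾.inv g) a ∈ α.D (𝔾.inv g) := PG.act_mem h1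
  have h3 := α.comp_cond g (𝔾.inv g) (by rw [𝔾.r_inv]) a h1 h2
  rw [h3, 𝔾.mul_inv, α.act_id _ (PG.isId_r g) a (PG.mem_r ha)]

lemma PG.act_inv_act {g : G} {x : R} (hx : x ∈ α.D (𝔾.inv g)) :
    α.act (𝔾.inv g) (α.act g x) = x := by
  have h2 : α.act g x ∈ α.D (𝔾.inv (𝔾.inv g)) := by rw [𝔾.inv_inv]; exact PG.act_mem hx
  have h3 := α.comp_cond (𝔾.inv g) g (by rw [𝔾.d_inv]) x hx h2
  rw [h3, 𝔾.inv_mul]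
  apply α.act_id _ (PG.isId_d g)
  have h4 : x ∈ α.D (𝔾.r (𝔾.inv g)) := PG.mem_r hx
  rwa [𝔾.r_inv] at h4

lemma PG.act_sum {g : G} {ι : Type*} {s : Finset ι} {f : ι → R}
    (hf : ∀ i ∈ s, f i ∈ α.D (𝔾.inv g)) :
    α.act g (∑ i ∈ s, f i) = ∑ i ∈ s, α.act g (f i) := by
  induction s using Finset.cons_induction with
  | empty => simpa using PG.act_zero (α := α) g
  | cons a s ha ih =>
    rw [Finset.sum_cons, Finset.sum_cons,
      α.map_add g _ (hf a (Finset.mem_cons_self a s))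
        _ (PG.sum_mem_D fun i hi => hf i (Finset.mem_cons_of_mem hi)),
      ih fun i hi => hf i (Finset.mem_cons_of_mem hi)]

lemma PG.act_one (hone : ∀ g, IsIdentityElem (one g) (α.D g))
    (hcentral : ∀ g (x : R), one g * x = x * one g) (g : G) :
    α.act g (one (𝔾.inv g)) = one g := by
  have hum : α.act g (one (𝔾.inv g)) ∈ α.D g := PG.act_mem (PG.one_mem hone hcentral _)
  have hog : α.act (𝔾.inv g) (one g) ∈ α.D (𝔾.inv g) :=
    PG.act_mem (by rw [𝔾.inv_inv]; exact PG.one_mem hone hcentral g)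
  have h1 : α.act g (one (𝔾.inv g)) * one g = one g := by
    calc α.act g (one (𝔾.inv g)) * one g
        = α.act g (one (𝔾.inv g)) * α.act g (α.act (𝔾.inv g) (one g)) := by
          rw [PG.act_act_inv (PG.one_mem hone hcentral g)]
      _ = α.act g (one (𝔾.inv g) * α.act (𝔾.inv g) (one g)) :=
          (α.map_mul g _ (PG.one_mem hone hcentral _) _ hog).symm
      _ = α.act g (α.act (𝔾.inv g) (one g)) := by
          rw [((hone (𝔾.inv g)).2 _ hog).1]
      _ = one g := PG.act_act_inv (PG.one_mem hone hcentral g)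
  have h2 : α.act g (one (𝔾.inv g)) * one g = α.act g (one (𝔾.inv g)) :=
    ((hone g).2 _ hum).2
  rw [← h2, h1]

section WithDelta
variable {A : Type u} [Ring A] {σ : SkewRingRep 𝔾 α A}

lemma PG.delta_zero (g : G) : σ.δ g 0 = 0 := by
  have h := σ.map_add g 0 (PG.zero_mem _) 0 (PG.zero_mem _)
  rw [add_zero] at h
  exact left_eq_add.mp h

lemma PG.delta_neg {g : G} {x : R} (hx : x ∈ α.D g) : σ.δ g (-x) = -σ.δ g x := by
  have h := σ.map_add g x hx (-x) ((α.ideal g).neg_mem hx)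
  rw [add_neg_cancel, PG.delta_zero] at h
  exact (neg_eq_of_add_eq_zero_right h.symm).symm

lemma PG.delta_sum (g : G) {ι : Type*} {s : Finset ι} {f : ι → R}
    (hf : ∀ i ∈ s, f i ∈ α.D g) :
    σ.δ g (∑ i ∈ s, f i) = ∑ i ∈ s, σ.δ g (f i) := by
  induction s using Finset.cons_induction with
  | empty => simpa using PG.delta_zero (σ := σ) g
  | cons a s ha ih =>
    rw [Finset.sum_cons, Finset.sum_cons,
      σ.map_add g _ (hf a (Finset.mem_cons_self a s))
        _ (PG.sum_mem_D fun i hi => hf i (Finset.mem_cons_of_mem hi)),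
      ih fun i hi => hf i (Finset.mem_cons_of_mem hi)]

end WithDelta

end Aux
section Main

set_option linter.unusedSectionVars false

variable {G : Type u} [Fintype G] [DecidableEq G] {𝔾 : AlgGroupoid G} {R : Type u} [Ring R]
  {α : PartialGroupoidAction 𝔾 R (Set.univ : Set R)} {one : G → R}
  {A : Type u} [Ring A] {σ : SkewRingRep 𝔾 α A}
  (hone : ∀ g, IsIdentityElem (one g) (α.D g))
  (hcentral : ∀ g (x : R), one g * x = x * one g)
  (horth : ∀ e f, 𝔾.isId e → 𝔾.isId f → e ≠ f → ∀ x ∈ α.D e, ∀ y ∈ α.D f, x * y = 0)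

include hone hcentral

lemma PG.eps_mul_t (x : R) :
    (∑ e ∈ Finset.univ.filter (fun e => 𝔾.isId e), σ.δ e (x * one e)) * (∑ g : G, σ.δ g (one g))
      = ∑ g : G, σ.δ g (x * one g) := by
  rw [Finset.sum_mul_sum, Finset.sum_comm]
  refine Finset.sum_congr rfl fun g _ => ?_
  have hid : 𝔾.isId (𝔾.r g) := PG.isId_r g
  have hmem : 𝔾.r g ∈ Finset.univ.filter (fun e => 𝔾.isId e) :=
    Finset.mem_filter.mpr ⟨Finset.mem_univ _, hid⟩
  rw [Finset.sum_eq_single_of_mem (𝔾.r g) hmem ?side]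
  case side =>
    intro e hef hne
    apply σ.mul_of_ne e g ?_ _ (PG.mul_one_mem hone hcentral e x) _ (PG.one_mem hone hcentral g)
    have h' : 𝔾.d e = e := (Finset.mem_filter.mp hef).2
    rw [h']
    exact hne
  have hd : 𝔾.d (𝔾.r g) = 𝔾.r g := hid
  rw [σ.mul_of (𝔾.r g) g hd _ (PG.mul_one_mem hone hcentral _ x) _ (PG.one_mem hone hcentral g),
    𝔾.r_mul, PG.inv_of_isId hid, α.act_id _ hid _ (PG.mul_one_mem hone hcentral _ x)]
  have hmem2 : x * one (𝔾.r g) * one g ∈ α.D (𝔾.r g) :=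
    PG.mem_r ((α.ideal g).mul_mem_left (PG.mul_one_mem hone hcentral _ x) (PG.one_mem hone hcentral g))
  rw [α.act_id _ hid _ hmem2]
  congr 1
  rw [mul_assoc, ((hone (𝔾.r g)).2 (one g) (PG.mem_r (PG.one_mem hone hcentral g))).1]

lemma PG.t_mul_eps (x y : R) :
    (∑ g : G, σ.δ g (x * one g)) *
        (∑ e ∈ Finset.univ.filter (fun e => 𝔾.isId e), σ.δ e (y * one e))
      = ∑ g : G, σ.δ g (x * α.act g (y * one (𝔾.inv g))) := by
  rw [Finset.sum_mul_sum]
  refine Finset.sum_congr rfl fun g _ => ?_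
  have hid : 𝔾.isId (𝔾.d g) := PG.isId_d g
  have hmem : 𝔾.d g ∈ Finset.univ.filter (fun e => 𝔾.isId e) :=
    Finset.mem_filter.mpr ⟨Finset.mem_univ _, hid⟩
  rw [Finset.sum_eq_single_of_mem (𝔾.d g) hmem ?side]
  case side =>
    intro e hef hne
    apply σ.mul_of_ne g e ?_ _ (PG.mul_one_mem hone hcentral g x) _ (PG.mul_one_mem hone hcentral e y)
    rw [PG.r_of_isId (Finset.mem_filter.mp hef).2]
    exact fun h => hne h.symm
  rw [σ.mul_of g (𝔾.d g) (by rw [𝔾.r_d]) _ (PG.mul_one_mem hone hcentral g x) _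
    (PG.mul_one_mem hone hcentral _ y), 𝔾.mul_d]
  have ha : α.act (𝔾.inv g) (x * one g) ∈ α.D (𝔾.inv g) :=
    PG.act_mem (by rw [𝔾.inv_inv]; exact PG.mul_one_mem hone hcentral g x)
  set a := α.act (𝔾.inv g) (x * one g) with ha_def
  have hay : a * y ∈ α.D (𝔾.inv g) := PG.mem_mul hone hcentral ha y
  have hay' : a * y ∈ α.D (𝔾.d g) := by
    have h := PG.mem_r hay
    rwa [𝔾.r_inv] at h
  have claim1 : a * (y * one (𝔾.d g)) = a * (y * one (𝔾.inv g)) := by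
    calc a * (y * one (𝔾.d g)) = a * y * one (𝔾.d g) := (mul_assoc _ _ _).symm
      _ = a * y := ((hone (𝔾.d g)).2 _ hay').2
      _ = a * one (𝔾.inv g) * y := by rw [((hone (𝔾.inv g)).2 a ha).2]
      _ = a * (y * one (𝔾.inv g)) := by rw [mul_assoc, hcentral]
  rw [claim1, α.map_mul g a ha _ (PG.mul_one_mem hone hcentral _ y), ha_def,
    PG.act_act_inv (PG.mul_one_mem hone hcentral g x)]
  congr 1
  rw [mul_assoc, ((hone g).2 _ (PG.act_mem (PG.mul_one_mem hone hcentral _ y))).1]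

end Main
section GaloisDot

set_option linter.unusedSectionVars false

variable {G : Type u} [Fintype G] [DecidableEq G] {𝔾 : AlgGroupoid G} {R : Type u} [Ring R]
  {α : PartialGroupoidAction 𝔾 R (Set.univ : Set R)} {one : G → R}
  (hone : ∀ g, IsIdentityElem (one g) (α.D g))
  (hcentral : ∀ g (x : R), one g * x = x * one g)
  (horth : ∀ e f, 𝔾.isId e → 𝔾.isId f → e ≠ f → ∀ x ∈ α.D e, ∀ y ∈ α.D f, x * y = 0)

include hone hcentral horth

lemma PG.galois_dot {n : ℕ} {xs ys : Fin n → R}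
    (hGal : ∀ g : G, ∑ i, xs i * α.act g (ys i * one (𝔾.inv g)) = if 𝔾.isId g then one g else 0)
    (g h : G) {c : R} (hc : c ∈ α.D h) :
    ∑ i : Fin n, c * (α.act h (xs i * one (𝔾.inv h)) * α.act g (ys i * one (𝔾.inv g))) =
      if g = h then c else 0 := by
  by_cases hr : 𝔾.r g = 𝔾.r h
  · -- composable case
    have hcomp : 𝔾.d (𝔾.inv h) = 𝔾.r g := by rw [𝔾.d_inv, hr]
    set k := 𝔾.mul (𝔾.inv h) g with hk_def
    have hrk : 𝔾.r k = 𝔾.d h := by rw [hk_def, 𝔾.r_mul' _ _ hcomp, 𝔾.r_inv]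
    have h1gh : one g * one h ∈ α.D g := PG.mem_mul hone hcentral (PG.one_mem hone hcentral g) (one h)
    have h1gh' : one g * one h ∈ α.D h := PG.mul_mem' hone hcentral (PG.one_mem hone hcentral h) (one g)
    set u := α.act (𝔾.inv g) (one g * one h) with hu_def
    have hu : u ∈ α.D (𝔾.inv g) := PG.act_mem (by rw [𝔾.inv_inv]; exact h1gh)
    have hgu : α.act g u = one g * one h := PG.act_act_inv h1gh
    have hguh : α.act g u ∈ α.D (𝔾.inv (𝔾.inv h)) := by rw [𝔾.inv_inv, hgu]; exact h1gh'
    have huk : u ∈ α.D (𝔾.inv k) := α.dom_cond (𝔾.inv h) g hcomp u hu hguh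
    set c' := α.act (𝔾.inv h) c with hc'_def
    have hc' : c' ∈ α.D (𝔾.inv h) := PG.act_mem (by rw [𝔾.inv_inv]; exact hc)
    have hhc' : α.act h c' = c := PG.act_act_inv hc
    set B := α.act k u with hB_def
    set Cc := B * one (𝔾.inv h) with hC_def
    have hstep : ∀ i : Fin n,
        c * (α.act h (xs i * one (𝔾.inv h)) * α.act g (ys i * one (𝔾.inv g)))
          = α.act h (c' * (xs i * α.act k (ys i * one (𝔾.inv k)) * Cc)) := by
      intro i
      set z := xs i * one (𝔾.inv h) with hz_def
      set v := ys i * one (𝔾.inv g) with hv_def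
      have hz : z ∈ α.D (𝔾.inv h) := PG.mul_one_mem hone hcentral _ _
      have hv : v ∈ α.D (𝔾.inv g) := PG.mul_one_mem hone hcentral _ _
      have hactz : α.act h z ∈ α.D h := PG.act_mem hz
      have hactv : α.act g v ∈ α.D g := PG.act_mem hv
      have sub1 : α.act g (v * u) = α.act g v * one h := by
        calc α.act g (v * u) = α.act g v * α.act g u := α.map_mul g v hv u hu
          _ = α.act g v * (one g * one h) := by rw [hgu]
          _ = α.act g v * one g * one h := (mul_assoc _ _ _).symm
          _ = α.act g v * one h := by rw [((hone g).2 _ hactv).2]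
      have hgvu_mem : α.act g (v * u) ∈ α.D h := by
        rw [sub1]; exact PG.mul_one_mem hone hcentral h _
      have hvu_mem : v * u ∈ α.D (𝔾.inv g) := PG.mem_mul hone hcentral hv u
      have hcompcond : α.act (𝔾.inv h) (α.act g (v * u)) = α.act k (v * u) :=
        α.comp_cond (𝔾.inv h) g hcomp (v * u) hvu_mem (by rw [𝔾.inv_inv]; exact hgvu_mem)
      set w := α.act (𝔾.inv h) (α.act g (v * u)) with hw_def
      have hw : w ∈ α.D (𝔾.inv h) := PG.act_mem (by rw [𝔾.inv_inv]; exact hgvu_mem)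
      have hhw : α.act h w = α.act g (v * u) := PG.act_act_inv hgvu_mem
      have sub2 : α.act h z * α.act g v = α.act h (z * w) := by
        calc α.act h z * α.act g v
            = α.act h z * one h * α.act g v := by rw [((hone h).2 _ hactz).2]
          _ = α.act h z * (one h * α.act g v) := mul_assoc _ _ _
          _ = α.act h z * (α.act g v * one h) := by rw [hcentral]
          _ = α.act h z * α.act g (v * u) := by rw [← sub1]
          _ = α.act h z * α.act h w := by rw [hhw]
          _ = α.act h (z * w) := (α.map_mul h z hz w hw).symm
      have hzw : z * w ∈ α.D (𝔾.inv h) := PG.mem_mul hone hcentral hz w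
      have sub3 : c * α.act h (z * w) = α.act h (c' * (z * w)) := by
        rw [← hhc']
        exact (α.map_mul h c' hc' _ hzw).symm
      have hwk : w = α.act k (ys i * one (𝔾.inv k)) * B := by
        have hvu : v * u = ys i * one (𝔾.inv k) * u := by
          calc v * u = ys i * (one (𝔾.inv g) * u) := mul_assoc _ _ _
            _ = ys i * u := by rw [((hone (𝔾.inv g)).2 u hu).1]
            _ = ys i * (one (𝔾.inv k) * u) := by rw [((hone (𝔾.inv k)).2 u huk).1]
            _ = ys i * one (𝔾.inv k) * u := (mul_assoc _ _ _).symm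
        rw [hcompcond, hvu,
          α.map_mul k _ (PG.mul_one_mem hone hcentral _ _) u huk, ← hB_def]
      have sub5 : z * w = xs i * α.act k (ys i * one (𝔾.inv k)) * Cc := by
        set Gi := α.act k (ys i * one (𝔾.inv k)) with hGi_def
        calc z * w = xs i * one (𝔾.inv h) * (Gi * B) := by rw [hwk]
          _ = xs i * (one (𝔾.inv h) * (Gi * B)) := mul_assoc _ _ _
          _ = xs i * (Gi * B * one (𝔾.inv h)) := by rw [hcentral]
          _ = xs i * (Gi * (B * one (𝔾.inv h))) := by rw [mul_assoc Gi]
          _ = xs i * Gi * Cc := (mul_assoc _ _ _).symm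
      rw [sub2, sub3, sub5]
    rw [Finset.sum_congr rfl fun i _ => hstep i]
    have hact : α.act h (∑ i : Fin n, c' * (xs i * α.act k (ys i * one (𝔾.inv k)) * Cc))
        = ∑ i : Fin n, α.act h (c' * (xs i * α.act k (ys i * one (𝔾.inv k)) * Cc)) :=
      PG.act_sum fun i _ => PG.mem_mul hone hcentral hc' _
    rw [← hact]
    have hsum : (∑ i : Fin n, c' * (xs i * α.act k (ys i * one (𝔾.inv k)) * Cc))
        = c' * ((if 𝔾.isId k then one k else 0) * Cc) := by
      rw [← Finset.mul_sum, ← Finset.sum_mul, hGal k]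
    rw [hsum]
    by_cases hk : 𝔾.isId k
    · have e2 : k = 𝔾.d h := by
        have h' := PG.r_of_isId hk
        rw [hrk] at h'
        exact h'.symm
      have hgeqh : g = h := by
        have hassoc := 𝔾.mul_assoc' h (𝔾.inv h) g (by rw [𝔾.r_inv]) hcomp
        rw [𝔾.mul_inv, ← hr, 𝔾.r_mul, ← hk_def] at hassoc
        rw [hassoc, e2, 𝔾.mul_d]
      rw [if_pos hk, if_pos hgeqh]
      have hu1 : u = one (𝔾.inv h) := by
        have hao := PG.act_one hone hcentral (𝔾.inv h)
        rw [𝔾.inv_inv] at hao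
        rw [hu_def, hgeqh, ((hone h).2 _ (PG.one_mem hone hcentral h)).1, hao]
      have honeinvh_dh : one (𝔾.inv h) ∈ α.D (𝔾.d h) := by
        have h' := PG.mem_r (PG.one_mem hone hcentral (𝔾.inv h))
        rwa [𝔾.r_inv] at h'
      have hB1 : B = one (𝔾.inv h) := by
        rw [hB_def, hu1, e2, α.act_id _ (PG.isId_d h) _ honeinvh_dh]
      have hCc1 : Cc = one (𝔾.inv h) := by
        rw [hC_def, hB1, ((hone (𝔾.inv h)).2 _ (PG.one_mem hone hcentral (𝔾.inv h))).2]
      rw [hCc1, e2, ((hone (𝔾.d h)).2 _ honeinvh_dh).1,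
        ((hone (𝔾.inv h)).2 c' hc').2, hhc']
    · have hne : g ≠ h := by
        intro hgh
        apply hk
        rw [hk_def, hgh, 𝔾.inv_mul]
        exact PG.isId_d h
      rw [if_neg hk, if_neg hne, zero_mul, mul_zero, PG.act_zero]
  · have hgh : g ≠ h := fun e => hr (by rw [e])
    rw [if_neg hgh]
    apply Finset.sum_eq_zero
    intro i _
    have h0 : α.act h (xs i * one (𝔾.inv h)) * α.act g (ys i * one (𝔾.inv g)) = 0 :=
      horth (𝔾.r h) (𝔾.r g) (PG.isId_r h) (PG.isId_r g) (fun e => hr e.symm) _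
        (PG.mem_r (PG.act_mem (PG.mul_one_mem hone hcentral _ _))) _
        (PG.mem_r (PG.act_mem (PG.mul_one_mem hone hcentral _ _)))
    rw [h0, mul_zero]

end GaloisDot
/-- **Theorem 5.3 (i) ⇔ (v) ⇔ (vi)**: under the standing hypotheses, the
following are equivalent: (a) `R` is an `α`-partial Galois extension of
`R^α`; (b) `R·t·R = R⋆_αG` where `t = ∑_{g ∈ G} 1_g δ_g` (and `R` embeds in
`A = R⋆_αG` via `ε : x ↦ ∑_{e ∈ G₀} (x 1_e) δ_e`); (c) the map
`τ' : R ⊗_{R^α} R → R⋆_αG`, `τ'(x ⊗ y) = ∑_g x α_g(y 1_{g⁻¹}) δ_g`, is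
surjective. -/
theorem partial_galois_iff_RtR_iff_tau'_surj {G : Type u} [Nonempty G] [Fintype G]
    [DecidableEq G] (𝔾 : AlgGroupoid G) {R : Type u} [Ring R]
    (α : PartialGroupoidAction 𝔾 R (Set.univ : Set R))
    (one : G → R) (hone : ∀ g, IsIdentityElem (one g) (α.D g))
    (hcentral : ∀ g (x : R), one g * x = x * one g)
    (horth : ∀ e f, 𝔾.isId e → 𝔾.isId f → e ≠ f → ∀ x ∈ α.D e, ∀ y ∈ α.D f, x * y = 0)
    (hunit : (1 : R) = ∑ e ∈ Finset.univ.filter (fun e => 𝔾.isId e), one e)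
    {A : Type u} [Ring A] (σ : SkewRingRep 𝔾 α A)
    (h1A : (1 : A) = ∑ e ∈ Finset.univ.filter (fun e => 𝔾.isId e), σ.δ e (one e)) :
    let ε : R → A := fun x => ∑ e ∈ Finset.univ.filter (fun e => 𝔾.isId e), σ.δ e (x * one e)
    let tA : A := ∑ g : G, σ.δ g (one g)
    let RtR : AddSubgroup A := AddSubgroup.closure {a : A | ∃ x y : R, a = ε x * tA * ε y}
    (IsPartialGalois 𝔾 α one ↔ RtR = ⊤) ∧
    ((RtR = ⊤) ↔
      ∀ a : A, ∃ (k : ℕ) (xs ys : Fin k → R),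
        a = ∑ i, ∑ g : G, σ.δ g (xs i * α.act g (ys i * one (𝔾.inv g)))) := by
  intro ε tA RtR
  have hkey : ∀ x y : R, ε x * tA * ε y
      = ∑ g : G, σ.δ g (x * α.act g (y * one (𝔾.inv g))) := by
    intro x y
    have h1 : ε x * tA = ∑ g : G, σ.δ g (x * one g) := PG.eps_mul_t hone hcentral x
    have h2 : (∑ g : G, σ.δ g (x * one g)) * ε y
        = ∑ g : G, σ.δ g (x * α.act g (y * one (𝔾.inv g))) :=
      PG.t_mul_eps hone hcentral x y
    rw [h1, h2]
  -- closure-stability of the predicate in (c)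
  have hP0 : ∃ (k : ℕ) (xs ys : Fin k → R), (0 : A)
      = ∑ i, ∑ g : G, σ.δ g (xs i * α.act g (ys i * one (𝔾.inv g))) :=
    ⟨0, Fin.elim0, Fin.elim0, by simp⟩
  have hPadd : ∀ a b : A,
      (∃ (k : ℕ) (xs ys : Fin k → R), a
        = ∑ i, ∑ g : G, σ.δ g (xs i * α.act g (ys i * one (𝔾.inv g)))) →
      (∃ (k : ℕ) (xs ys : Fin k → R), b
        = ∑ i, ∑ g : G, σ.δ g (xs i * α.act g (ys i * one (𝔾.inv g)))) →
      (∃ (k : ℕ) (xs ys : Fin k → R), a + b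
        = ∑ i, ∑ g : G, σ.δ g (xs i * α.act g (ys i * one (𝔾.inv g)))) := by
    rintro a b ⟨k1, xs1, ys1, rfl⟩ ⟨k2, xs2, ys2, rfl⟩
    refine ⟨k1 + k2, Fin.append xs1 xs2, Fin.append ys1 ys2, ?_⟩
    rw [Fin.sum_univ_add]
    congr 1
    · exact Finset.sum_congr rfl fun i _ => by rw [Fin.append_left, Fin.append_left]
    · exact Finset.sum_congr rfl fun i _ => by rw [Fin.append_right, Fin.append_right]
  have hPneg : ∀ a : A,
      (∃ (k : ℕ) (xs ys : Fin k → R), a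
        = ∑ i, ∑ g : G, σ.δ g (xs i * α.act g (ys i * one (𝔾.inv g)))) →
      (∃ (k : ℕ) (xs ys : Fin k → R), -a
        = ∑ i, ∑ g : G, σ.δ g (xs i * α.act g (ys i * one (𝔾.inv g)))) := by
    rintro a ⟨k, xs, ys, rfl⟩
    refine ⟨k, fun i => -xs i, ys, ?_⟩
    have hterm : ∀ i : Fin k, ∀ g : G,
        σ.δ g (-xs i * α.act g (ys i * one (𝔾.inv g)))
          = -σ.δ g (xs i * α.act g (ys i * one (𝔾.inv g))) := fun i g => by
      rw [neg_mul, PG.delta_neg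
        (PG.mul_mem' hone hcentral (PG.act_mem (PG.mul_one_mem hone hcentral _ _)) _)]
    rw [Finset.sum_congr rfl fun i _ => Finset.sum_congr rfl fun g _ => hterm i g,
      Finset.sum_congr rfl fun i (_ : i ∈ Finset.univ) =>
        (Finset.sum_neg_distrib (s := Finset.univ) _),
      Finset.sum_neg_distrib]
  -- (b) ↔ (c)
  have hTopC : (RtR = ⊤) ↔
      ∀ a : A, ∃ (k : ℕ) (xs ys : Fin k → R),
        a = ∑ i, ∑ g : G, σ.δ g (xs i * α.act g (ys i * one (𝔾.inv g))) := by
    constructor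
    · intro htop a
      have ha : a ∈ RtR := by rw [htop]; exact AddSubgroup.mem_top a
      refine AddSubgroup.closure_induction ?_ ?_ ?_ ?_ ha
      · rintro x ⟨x1, y1, rfl⟩
        exact ⟨1, fun _ => x1, fun _ => y1, by rw [hkey, Fin.sum_univ_one]⟩
      · exact hP0
      · exact fun x y _ _ hx hy => hPadd x y hx hy
      · exact fun x _ hx => hPneg x hx
    · intro hC
      rw [AddSubgroup.eq_top_iff']
      intro a
      obtain ⟨k, xs, ys, rfl⟩ := hC a
      exact AddSubgroup.sum_mem _ fun i _ =>
        AddSubgroup.subset_closure ⟨xs i, ys i, (hkey _ _).symm⟩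
  -- (a) ↔ (c)
  have hGalC : IsPartialGalois 𝔾 α one ↔
      ∀ a : A, ∃ (k : ℕ) (xs ys : Fin k → R),
        a = ∑ i, ∑ g : G, σ.δ g (xs i * α.act g (ys i * one (𝔾.inv g))) := by
    constructor
    · rintro ⟨n, xs, ys, hGal⟩ a
      obtain ⟨s, cf, hcf, rfl⟩ := σ.spans a
      refine Finset.sum_induction _
        (fun a => ∃ (k : ℕ) (xs ys : Fin k → R),
          a = ∑ i, ∑ g : G, σ.δ g (xs i * α.act g (ys i * one (𝔾.inv g))))
        hPadd hP0 ?_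
      intro h _
      refine ⟨n, fun i => cf h * α.act h (xs i * one (𝔾.inv h)), ys, ?_⟩
      have keyh : (∑ i : Fin n, ∑ g : G,
          σ.δ g (cf h * α.act h (xs i * one (𝔾.inv h)) * α.act g (ys i * one (𝔾.inv g))))
            = σ.δ h (cf h) := by
        rw [Finset.sum_comm]
        have hterm : ∀ g : G, (∑ i : Fin n,
            σ.δ g (cf h * α.act h (xs i * one (𝔾.inv h)) * α.act g (ys i * one (𝔾.inv g))))
              = σ.δ g (if g = h then cf h else 0) := by
          intro g
          have hds : σ.δ g (∑ i : Fin n,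
              cf h * α.act h (xs i * one (𝔾.inv h)) * α.act g (ys i * one (𝔾.inv g)))
                = ∑ i : Fin n, σ.δ g
                  (cf h * α.act h (xs i * one (𝔾.inv h)) * α.act g (ys i * one (𝔾.inv g))) :=
            PG.delta_sum g fun i _ =>
              PG.mul_mem' hone hcentral (PG.act_mem (PG.mul_one_mem hone hcentral _ _)) _
          rw [← hds]
          congr 1
          calc (∑ i : Fin n,
              cf h * α.act h (xs i * one (𝔾.inv h)) * α.act g (ys i * one (𝔾.inv g)))
              = ∑ i : Fin n, cf h *
                  (α.act h (xs i * one (𝔾.inv h)) * α.act g (ys i * one (𝔾.inv g))) :=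
                Finset.sum_congr rfl fun i _ => mul_assoc _ _ _
            _ = if g = h then cf h else 0 :=
                PG.galois_dot hone hcentral horth hGal g h (hcf h)
        rw [Finset.sum_congr rfl fun g _ => hterm g,
          Finset.sum_eq_single_of_mem h (Finset.mem_univ h)
            (fun g _ hg => by rw [if_neg hg]; exact PG.delta_zero g), if_pos rfl]
      exact keyh.symm
    · intro hC
      obtain ⟨k, xs, ys, h1⟩ := hC 1
      refine ⟨k, xs, ys, fun g => ?_⟩
      have hS : ∀ g : G, (∑ i, xs i * α.act g (ys i * one (𝔾.inv g))) ∈ α.D g := fun g =>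
        PG.sum_mem_D fun i _ =>
          PG.mul_mem' hone hcentral (PG.act_mem (PG.mul_one_mem hone hcentral _ _)) _
      have hI : ∀ g : G, (if 𝔾.isId g then one g else 0) ∈ α.D g := fun g => by
        split
        · exact PG.one_mem hone hcentral g
        · exact PG.zero_mem g
      have hmem : ∀ g : G, (∑ i, xs i * α.act g (ys i * one (𝔾.inv g)))
          + -(if 𝔾.isId g then one g else 0) ∈ α.D g := fun g =>
        (α.ideal g).add_mem (hS g) ((α.ideal g).neg_mem (hI g))
      have h2 : (1 : A) = ∑ g : G, σ.δ g (if 𝔾.isId g then one g else 0) := by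
        rw [h1A, Finset.sum_filter]
        refine Finset.sum_congr rfl fun g _ => ?_
        split
        · rfl
        · exact (PG.delta_zero g).symm
      have h3 : (1 : A) = ∑ g : G, σ.δ g (∑ i, xs i * α.act g (ys i * one (𝔾.inv g))) := by
        rw [h1, Finset.sum_comm]
        refine Finset.sum_congr rfl fun g _ => ?_
        have hds : σ.δ g (∑ i, xs i * α.act g (ys i * one (𝔾.inv g)))
            = ∑ i, σ.δ g (xs i * α.act g (ys i * one (𝔾.inv g))) :=
          PG.delta_sum g fun i _ =>
            PG.mul_mem' hone hcentral (PG.act_mem (PG.mul_one_mem hone hcentral _ _)) _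
        exact hds.symm
      have h4 : (∑ g : G, σ.δ g ((∑ i, xs i * α.act g (ys i * one (𝔾.inv g)))
          + -(if 𝔾.isId g then one g else 0))) = 0 := by
        have hexp : ∀ g : G, σ.δ g ((∑ i, xs i * α.act g (ys i * one (𝔾.inv g)))
            + -(if 𝔾.isId g then one g else 0))
              = σ.δ g (∑ i, xs i * α.act g (ys i * one (𝔾.inv g)))
                + -σ.δ g (if 𝔾.isId g then one g else 0) := fun g => by
          rw [σ.map_add g _ (hS g) _ ((α.ideal g).neg_mem (hI g)), PG.delta_neg (hI g)]
        rw [Finset.sum_congr rfl fun g _ => hexp g, Finset.sum_add_distrib,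
          Finset.sum_neg_distrib, ← h3, ← h2, add_neg_cancel]
      have h5 := σ.indep Finset.univ
        (fun g => (∑ i, xs i * α.act g (ys i * one (𝔾.inv g)))
          + -(if 𝔾.isId g then one g else 0)) hmem h4
      have h6 := h5 g (Finset.mem_univ g)
      exact add_neg_eq_zero.mp h6
  exact ⟨hGalC.trans hTopC.symm, hTopC⟩
end
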